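/- arXiv:1104.1885 — 5 statements merged into one kernel-verified Lean document; each statement's English description precedes it below -/
import Mathlib

section
/- For every B ⊆ {1,…,N}, the following conditions are equivalent: (i) the cone c(Φ_flip^B) of nonnegative linear combinations of the flipped sequence Φ_flip^B is salient (contains no line); (ii) the closure of the semi-closed quadrant Q_neg^B meets V only in the point 0; (iii) for every λ ∈ F, the set V(Φ,λ) ∩ closure(Q_neg^B) is bounded. -/
open scoped Pointwise
open Classical MvPolynomial

noncomputable section

namespace AC

section Defs

variable {E : Type*} [AddCommGroup E] [Module ℝ E]
variable {ι : Type*} [Fintype ι] [DecidableEq ι]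

/-- Characteristic function of a set, with values in `ℝ`. -/
def charFn {α : Type*} (s : Set α) (x : α) : ℝ := if x ∈ s then 1 else 0

/-- The cone of nonnegative linear combinations of `{Ψ i : i ∈ I}`. -/
def coneOf (Ψ : ι → E) (I : Set ι) : Set E :=
  {v | ∃ c : ι → ℝ, (∀ i, 0 ≤ c i) ∧ (∀ i, i ∉ I → c i = 0) ∧ v = ∑ i, c i • Ψ i}

/-- The cone of nonnegative linear combinations of all the `Ψ i`. -/
def fullCone (Ψ : ι → E) : Set E := coneOf Ψ Set.univ

/-- A cone is salient if it contains no line, i.e. `v, -v ∈ C → v = 0`. -/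
def Salient (C : Set E) : Prop := ∀ v ∈ C, -v ∈ C → v = 0

/-- A wall: a hyperplane spanned by `dim E - 1` linearly independent members of `Ψ`. -/
def IsWall (Ψ : ι → E) (H : Submodule ℝ E) : Prop :=
  ∃ S : Finset ι, S.card + 1 = Module.finrank ℝ E ∧
    LinearIndependent ℝ (fun i : {x // x ∈ S} => Ψ i.1) ∧
    H = Submodule.span ℝ (Ψ '' ↑S)

/-- An element is regular when it lies on no wall. -/
def IsRegular (Ψ : ι → E) (μ : E) : Prop :=
  ∀ H : Submodule ℝ E, IsWall Ψ H → μ ∉ H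

/-- `G(Ψ,τ)`: generating subsets whose cone contains `τ`. -/
def Gens (Ψ : ι → E) (τ : Set E) : Set (Finset ι) :=
  {I | Submodule.span ℝ (Ψ '' ↑I) = ⊤ ∧ τ ⊆ coneOf Ψ ↑I}

/-- `I` is basic when `{Ψ i : i ∈ I}` is a basis of `E`. -/
def IsBasic (Ψ : ι → E) (I : Finset ι) : Prop :=
  LinearIndependent ℝ (fun i : {x // x ∈ I} => Ψ i.1) ∧
    Submodule.span ℝ (Ψ '' ↑I) = ⊤

/-- `B(Ψ,τ)`: basic subsets whose cone contains `τ`. -/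
def Bases (Ψ : ι → E) (τ : Set E) : Set (Finset ι) :=
  {I | IsBasic Ψ I ∧ τ ⊆ coneOf Ψ ↑I}

/-- The combinatorial Brianchon-Gram polynomial `X(Ψ,τ)`; the variable `Sum.inl i`
plays the role of `p i` and `Sum.inr i` plays the role of `q i`. -/
def BGpoly (Ψ : ι → E) (τ : Set E) : MvPolynomial (ι ⊕ ι) ℤ :=
  ∑ I : Finset ι,
    if I ∈ Gens Ψ τ then
      (-1 : MvPolynomial (ι ⊕ ι) ℤ) ^ (I.card - Module.finrank ℝ E) *
        ((∏ j ∈ Iᶜ, X (Sum.inl j)) * ∏ i ∈ I, (X (Sum.inl i) + X (Sum.inr i)))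
    else 0

/-- The geometric Brianchon-Gram function `X_geom(Ψ,τ)` on `ℝ^ι`. -/
def XGeom (Ψ : ι → E) (τ : Set E) (x : ι → ℝ) : ℝ :=
  ∑ I : Finset ι,
    if I ∈ Gens Ψ τ then
      (-1 : ℝ) ^ (I.card - Module.finrank ℝ E) *
        ∏ j ∈ Iᶜ, (if 0 ≤ x j then (1 : ℝ) else 0)
    else 0

/-- The affine subspace `V(Ψ,λ)`. -/
def affSlice (Ψ : ι → E) (lam : E) : Set (ι → ℝ) := {x | ∑ i, x i • Ψ i = lam}

/-- The partition polytope `p(Ψ,λ)`. -/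
def partPoly (Ψ : ι → E) (lam : E) : Set (ι → ℝ) :=
  {x | (∀ i, 0 ≤ x i) ∧ ∑ i, x i • Ψ i = lam}

/-- The semi-closed quadrant `Q_neg^B`. -/
def Qneg (B : Finset ι) : Set (ι → ℝ) :=
  {x | (∀ i ∈ B, x i < 0) ∧ ∀ i ∉ B, 0 ≤ x i}

/-- The flipped sequence `Ψ_flip^B`. -/
def flipSeq (Ψ : ι → E) (B : Finset ι) : ι → E := fun i => if i ∈ B then -Ψ i else Ψ i

/-- The zonotope `b(Ψ)`. -/
def zonotope (Ψ : ι → E) : Set E :=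
  {v | ∃ t : ι → ℝ, (∀ i, 0 ≤ t i ∧ t i ≤ 1) ∧ v = ∑ i, t i • Ψ i}

/-- `x ∈ ℝ^ι` is a lattice point when all its coordinates are integers. -/
def isLatticePt (x : ι → ℝ) : Prop := ∀ i, ∃ n : ℤ, x i = (n : ℝ)

/-- `v` lies in the open side of the hyperplane `H` containing `τ`. -/
def InOpenSideOf (H : Submodule ℝ E) (τ : Set E) (v : E) : Prop :=
  ∃ ξ : E →ₗ[ℝ] ℝ, (∀ h ∈ H, ξ h = 0) ∧ (∀ μ ∈ τ, 0 < ξ μ) ∧ 0 < ξ v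

/-- The change of variables exchanging `p i` and `q i` for `i ∈ A`. -/
def flipVar (A : Finset ι) : ι ⊕ ι → ι ⊕ ι
  | Sum.inl i => if i ∈ A then Sum.inr i else Sum.inl i
  | Sum.inr i => if i ∈ A then Sum.inl i else Sum.inr i

/-- The ring map `Flip_A`, exchanging `p i` and `q i` for `i ∈ A`. -/
def FlipPoly (A : Finset ι) (P : MvPolynomial (ι ⊕ ι) ℤ) : MvPolynomial (ι ⊕ ι) ℤ :=
  MvPolynomial.rename (flipVar A) P

/-- Value substituted for the variable `p i` in the substitution `Geom_A`. -/
def geomValA (A : Finset ι) (x : ι → ℝ) : ι → ℝ := fun i =>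
  if i ∈ A then (if 0 < x i then 1 else 0) else (if 0 ≤ x i then 1 else 0)

/-- The substitution `Geom_A`: substitute `1 - p i` for `q i`, then `[x i ≥ 0]`
for `p i` if `i ∉ A`, and `[x i > 0]` for `p i` if `i ∈ A`. -/
def GeomA (A : Finset ι) (P : MvPolynomial (ι ⊕ ι) ℤ) (x : ι → ℝ) : ℝ :=
  MvPolynomial.aeval (Sum.elim (geomValA A x) (fun i => 1 - geomValA A x i)) P

/-- The substitution `Geom`: `[x i ≥ 0]` for `p i`, `[x i < 0]` for `q i`. -/
def Geom (P : MvPolynomial (ι ⊕ ι) ℤ) (x : ι → ℝ) : ℝ := GeomA ∅ P x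

/-- The semi-closed flipped partition polytope `p_flip(Ψ,A,λ)`. -/
def pflip (Ψ : ι → E) (A : Finset ι) (lam : E) : Set (ι → ℝ) :=
  {x | (∑ i, x i • Ψ i = lam) ∧ (∀ i ∈ A, x i < 0) ∧ ∀ i ∉ A, 0 ≤ x i}

/-- The linear map `x ↦ ∑ i, x i • Ψ i`. -/
def Mmap (Ψ : ι → E) : (ι → ℝ) →ₗ[ℝ] E where
  toFun x := ∑ i, x i • Ψ i
  map_add' x y := by simp [add_smul, Finset.sum_add_distrib]
  map_smul' c x := by simp [smul_smul, Finset.smul_sum]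

/-- A polynomial function on a finite-dimensional real vector space. -/
def IsPolynomialFun {W : Type*} [AddCommGroup W] [Module ℝ W] (f : W → ℝ) : Prop :=
  ∃ (n : ℕ) (b : Module.Basis (Fin n) ℝ W) (p : MvPolynomial (Fin n) ℝ),
    ∀ v, f v = MvPolynomial.eval (fun i => b.repr v i) p

/-- `Λ` is a (full) lattice in `W`: the ℤ-span of some ℝ-basis. -/
def IsLattice {W : Type*} [AddCommGroup W] [Module ℝ W] (Λ : AddSubgroup W) : Prop :=
  ∃ b : Module.Basis (Fin (Module.finrank ℝ W)) ℝ W,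
    ∀ v, v ∈ Λ ↔ ∀ i, ∃ n : ℤ, b.repr v i = (n : ℝ)

/-- Quasi-polynomial function on the lattice `Λ`: polynomial on each coset of
a finite-index sublattice (here `D • Λ`). -/
def IsQuasiPolynomialOn {W : Type*} [AddCommGroup W] [Module ℝ W]
    (Λ : AddSubgroup W) (f : W → ℝ) : Prop :=
  ∃ D : ℕ, 0 < D ∧ ∀ lam₀ ∈ Λ, ∃ P : W → ℝ, IsPolynomialFun P ∧
    ∀ lam' ∈ Λ, f (lam₀ + D • lam') = P (lam₀ + D • lam')

end Defs

section Topes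

variable {E : Type*} [AddCommGroup E] [Module ℝ E] [TopologicalSpace E]
variable {ι : Type*} [Fintype ι]

/-- A tope: a connected component of the set of regular elements. -/
def IsTope (Ψ : ι → E) (τ : Set E) : Prop :=
  ∃ μ, IsRegular Ψ μ ∧ τ = connectedComponentIn {x | IsRegular Ψ x} μ

/-- Two topes are adjacent along the wall `H` when the intersection of their
closures is contained in `H` and spans `H`. -/
def Adjacent (Ψ : ι → E) (τ₁ τ₂ : Set E) (H : Submodule ℝ E) : Prop :=
  IsTope Ψ τ₁ ∧ IsTope Ψ τ₂ ∧ τ₁ ≠ τ₂ ∧ IsWall Ψ H ∧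
    closure τ₁ ∩ closure τ₂ ⊆ (H : Set E) ∧
    Submodule.span ℝ (closure τ₁ ∩ closure τ₂) = H

end Topes

section Aux

variable {ι : Type*} [Fintype ι] [DecidableEq ι]

/-- The closed quadrant: the closure of `Qneg B`. -/
def Qcl (B : Finset ι) : Set (ι → ℝ) := {x | (∀ i ∈ B, x i ≤ 0) ∧ ∀ i ∉ B, 0 ≤ x i}

lemma isClosed_Qcl (B : Finset ι) : IsClosed (Qcl B) := by
  have h : Qcl B = (⋂ i ∈ B, {x : ι → ℝ | x i ≤ 0}) ∩
      (⋂ i ∈ (↑B : Set ι)ᶜ, {x : ι → ℝ | 0 ≤ x i}) := by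
    ext x
    simp [Qcl, Set.mem_iInter]
  rw [h]
  exact (isClosed_biInter fun i _ => isClosed_le (continuous_apply i) continuous_const).inter
    (isClosed_biInter fun i _ => isClosed_le continuous_const (continuous_apply i))

lemma closure_Qneg (B : Finset ι) : closure (Qneg B) = Qcl B := by
  apply subset_antisymm
  · exact closure_minimal (fun x hx => ⟨fun i hi => (hx.1 i hi).le, hx.2⟩) (isClosed_Qcl B)
  · intro x hx
    set v : ι → ℝ := fun i => if i ∈ B then (-1 : ℝ) else 0 with hv
    have htend : Filter.Tendsto (fun n : ℕ => x + ((n : ℝ) + 1)⁻¹ • v)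
        Filter.atTop (nhds x) := by
      have h0 : Filter.Tendsto (fun n : ℕ => ((n : ℝ) + 1)⁻¹) Filter.atTop (nhds 0) :=
        tendsto_one_div_add_atTop_nhds_zero_nat.congr (by intro n; rw [one_div])
      have h1 : Filter.Tendsto (fun n : ℕ => ((n : ℝ) + 1)⁻¹ • v)
          Filter.atTop (nhds ((0 : ℝ) • v)) := h0.smul_const v
      rw [zero_smul] at h1
      simpa using (tendsto_const_nhds.add h1 :
        Filter.Tendsto (fun n : ℕ => x + ((n : ℝ) + 1)⁻¹ • v) Filter.atTop (nhds (x + 0)))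
    refine mem_closure_of_tendsto htend (Filter.Eventually.of_forall fun n => ?_)
    have hpos : (0 : ℝ) < ((n : ℝ) + 1)⁻¹ := by positivity
    constructor
    · intro i hi
      have : x i + ((n : ℝ) + 1)⁻¹ • v i = x i - ((n : ℝ) + 1)⁻¹ := by
        simp [hv, hi, smul_eq_mul]
        ring
      show x i + ((n : ℝ) + 1)⁻¹ • v i < 0
      rw [this]
      have := hx.1 i hi
      linarith
    · intro i hi
      have : x i + ((n : ℝ) + 1)⁻¹ • v i = x i := by simp [hv, hi]
      show 0 ≤ x i + ((n : ℝ) + 1)⁻¹ • v i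
      rw [this]
      exact hx.2 i hi

lemma Qcl_smul {B : Finset ι} {x : ι → ℝ} (hx : x ∈ Qcl B) {c : ℝ} (hc : 0 ≤ c) :
    c • x ∈ Qcl B := by
  constructor
  · intro i hi
    exact mul_nonpos_of_nonneg_of_nonpos hc (hx.1 i hi)
  · intro i hi
    exact mul_nonneg hc (hx.2 i hi)

end Aux

/-- Equivalence of salience of the flipped cone, triviality of
`closure(Q_neg^B) ∩ V`, and boundedness of `V(Φ,λ) ∩ closure(Q_neg^B)`. -/
theorem salient_tfae
    {F : Type*} [NormedAddCommGroup F] [NormedSpace ℝ F] [FiniteDimensional ℝ F]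
    {N : ℕ} (Φ : Fin N → F)
    (hne : ∀ i, Φ i ≠ 0)
    (hgen : Submodule.span ℝ (Set.range Φ) = ⊤)
    (hsal : ∃ a : F →ₗ[ℝ] ℝ, ∀ i, 0 < a (Φ i))
    (B : Finset (Fin N)) :
    (Salient (fullCone (flipSeq Φ B)) ↔
        closure (Qneg B) ∩ {x : Fin N → ℝ | ∑ i, x i • Φ i = 0} = {0}) ∧
    ((closure (Qneg B) ∩ {x : Fin N → ℝ | ∑ i, x i • Φ i = 0} = {0}) ↔
        ∀ lam : F, Bornology.IsBounded (affSlice Φ lam ∩ closure (Qneg B))) := by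
  classical
  set Ψ : Fin N → F := flipSeq Φ B with hΨdef
  have hΨne : ∀ i, Ψ i ≠ 0 := by
    intro i
    simp only [hΨdef, flipSeq]
    split <;> simpa using hne i
  -- the sign flip map
  set f : (Fin N → ℝ) → (Fin N → ℝ) := fun x i => if i ∈ B then -x i else x i with hf
  have hff : ∀ x, f (f x) = x := by
    intro x; funext i; simp only [hf]; split <;> simp
  have hsum : ∀ x : Fin N → ℝ, ∑ i, x i • Ψ i = ∑ i, f x i • Φ i := by
    intro x
    refine Finset.sum_congr rfl fun i _ => ?_
    simp only [hΨdef, flipSeq, hf]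
    split <;> simp
  have hQclmem : ∀ x : Fin N → ℝ, x ∈ Qcl B ↔ ∀ i, 0 ≤ f x i := by
    intro x
    constructor
    · intro hx i
      by_cases h : i ∈ B
      · simp only [hf, if_pos h]
        linarith [hx.1 i h]
      · simp only [hf, if_neg h]
        exact hx.2 i h
    · intro hx
      constructor
      · intro i hi
        have := hx i
        simp only [hf, if_pos hi] at this
        linarith
      · intro i hi
        have := hx i
        simpa only [hf, if_neg hi] using this
  rw [closure_Qneg]
  constructor
  · -- (i) ↔ (ii)
    constructor
    · intro hS
      apply subset_antisymm
      · rintro x ⟨hx1, hx2⟩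
        have hfx : ∀ i, 0 ≤ f x i := (hQclmem x).1 hx1
        have hrel : ∑ i, f x i • Ψ i = 0 := by
          rw [hsum, hff]
          exact hx2
        have hfx0 : ∀ j, f x j = 0 := by
          intro j
          by_contra hj
          have hjpos : 0 < f x j := lt_of_le_of_ne (hfx j) (Ne.symm hj)
          have hv : f x j • Ψ j ∈ fullCone Ψ := by
            refine ⟨fun i => if i = j then f x j else 0, ?_, ?_, ?_⟩
            · intro i; by_cases h : i = j <;> simp [h, hfx j]
            · intro i hi; exact absurd (Set.mem_univ i) hi
            · rw [Finset.sum_eq_single j]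
              · simp
              · intro b _ hb
                simp [hb]
              · intro h
                exact absurd (Finset.mem_univ j) h
          have hnv : -(f x j • Ψ j) ∈ fullCone Ψ := by
            refine ⟨fun i => if i = j then 0 else f x i, ?_, ?_, ?_⟩
            · intro i; by_cases h : i = j <;> simp [h, hfx i]
            · intro i hi; exact absurd (Set.mem_univ i) hi
            · have h2 : ∑ i, (if i = j then (0:ℝ) else f x i) • Ψ i
                  = ∑ i ∈ Finset.univ.erase j, f x i • Ψ i := by
                rw [← Finset.sum_erase_add _ _ (Finset.mem_univ j)]
                simp only [eq_self_iff_true, if_true, zero_smul, add_zero]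
                exact Finset.sum_congr rfl fun i hi => by
                  rw [if_neg (Finset.ne_of_mem_erase hi)]
              rw [h2]
              have hsplit : f x j • Ψ j + ∑ i ∈ Finset.univ.erase j, f x i • Ψ i = 0 := by
                rw [add_comm, Finset.sum_erase_add _ _ (Finset.mem_univ j)]
                exact hrel
              exact (eq_neg_of_add_eq_zero_right hsplit).symm
          have := hS _ hv hnv
          have hΨj : Ψ j = 0 := by
            have := smul_eq_zero.1 this
            rcases this with h | h
            · exact absurd h (ne_of_gt hjpos)
            · exact h
          exact hΨne j hΨj
        have : f x = 0 := funext hfx0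
        have : x = 0 := by
          have := congrArg f this
          rw [hff] at this
          rw [this]
          funext i
          simp [hf]
        simpa using this
      · intro x hx
        simp only [Set.mem_singleton_iff] at hx
        subst hx
        refine ⟨⟨fun i _ => le_refl 0, fun i _ => le_refl 0⟩, by simp⟩
    · intro hV v hv hnv
      obtain ⟨c, hc, -, hcv⟩ := hv
      obtain ⟨d, hd, -, hdv⟩ := hnv
      have hrel : ∑ i, (c i + d i) • Ψ i = 0 := by
        have : ∑ i, (c i + d i) • Ψ i = ∑ i, c i • Ψ i + ∑ i, d i • Ψ i := by
          rw [← Finset.sum_add_distrib]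
          exact Finset.sum_congr rfl fun i _ => add_smul _ _ _
        rw [this, ← hcv, ← hdv]
        abel
      set x : Fin N → ℝ := f (fun i => c i + d i) with hx
      have hx1 : x ∈ Qcl B := by
        rw [hQclmem, hx, hff]
        intro i
        exact add_nonneg (hc i) (hd i)
      have hx2 : ∑ i, x i • Φ i = 0 := by
        rw [hx, ← hsum]
        exact hrel
      have hx0 : x = 0 := by
        have := hV ▸ (Set.mem_inter hx1 hx2 : x ∈ Qcl B ∩ _)
        simpa using this
      have hcd : ∀ i, c i + d i = 0 := by
        intro i
        have := congrArg f hx0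
        rw [hx, hff] at this
        have h2 := congrFun this i
        simpa [hf] using h2
      have hc0 : ∀ i, c i = 0 := fun i => le_antisymm (by have := hcd i; have := hd i; linarith) (hc i)
      rw [hcv]
      simp [hc0]
  · -- (ii) ↔ (iii)
    constructor
    · intro hV lam
      by_contra hb
      have h1 : ∀ n : ℕ, ∃ z ∈ affSlice Φ lam ∩ Qcl B, (n : ℝ) < ‖z‖ := by
        intro n
        by_contra h
        push_neg at h
        exact hb (isBounded_iff_forall_norm_le.2 ⟨n, h⟩)
      choose z hz hzn using h1
      have hzpos : ∀ n : ℕ, 0 < ‖z (n + 1)‖ := by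
        intro n
        have := hzn (n + 1)
        have : (0:ℝ) < (n:ℝ) + 1 := by positivity
        calc (0:ℝ) < (n:ℝ) + 1 := this
          _ < ‖z (n+1)‖ := by exact_mod_cast hzn (n+1)
      set u : ℕ → (Fin N → ℝ) := fun n => ‖z (n + 1)‖⁻¹ • z (n + 1) with hu
      have humem : ∀ n, u n ∈ Metric.sphere (0 : Fin N → ℝ) 1 := by
        intro n
        rw [mem_sphere_zero_iff_norm, hu]
        rw [norm_smul, norm_inv, norm_norm]
        exact inv_mul_cancel₀ (ne_of_gt (hzpos n))
      obtain ⟨u0, hu0, φ, hφ, hconv⟩ :=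
        (isCompact_sphere (0 : Fin N → ℝ) 1).tendsto_subseq humem
      have huQ : ∀ n, u n ∈ Qcl B := fun n =>
        Qcl_smul (hz (n + 1)).2 (inv_nonneg.2 (norm_nonneg _))
      have hu0Q : u0 ∈ Qcl B :=
        (isClosed_Qcl B).mem_of_tendsto hconv (Filter.Eventually.of_forall fun n => huQ (φ n))
      -- the linear map
      have hLcont : Continuous fun x : Fin N → ℝ => ∑ i, x i • Φ i := by
        exact continuous_finset_sum _ fun i _ => (continuous_apply i).smul continuous_const
      have hLu : ∀ n, (∑ i, u n i • Φ i) = ‖z (n + 1)‖⁻¹ • lam := by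
        intro n
        have hzlam := (hz (n + 1)).1
        simp only [affSlice, Set.mem_setOf_eq] at hzlam
        rw [hu]
        have : ∑ i, (‖z (n+1)‖⁻¹ • z (n+1)) i • Φ i
            = ‖z (n+1)‖⁻¹ • ∑ i, z (n+1) i • Φ i := by
          rw [Finset.smul_sum]
          exact Finset.sum_congr rfl fun i _ => by
            simp [smul_smul]
        rw [this, hzlam]
      have htend0 : Filter.Tendsto (fun n => ‖z (φ n + 1)‖⁻¹) Filter.atTop (nhds 0) := by
        apply squeeze_zero (fun n => inv_nonneg.2 (norm_nonneg _))
          (g := fun n : ℕ => ((n : ℝ) + 1)⁻¹)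
        · intro n
          apply inv_anti₀ (by positivity)
          calc ((n:ℝ) + 1) ≤ (φ n : ℝ) + 1 := by
                have hn : n ≤ φ n := hφ.le_apply
                have : (n:ℝ) ≤ (φ n : ℝ) := by exact_mod_cast hn
                linarith
            _ ≤ ‖z (φ n + 1)‖ := by
                have := hzn (φ n + 1)
                push_cast at this
                linarith
        · exact tendsto_one_div_add_atTop_nhds_zero_nat.congr (by intro n; rw [one_div])
      have hL0 : (∑ i, u0 i • Φ i) = 0 := by
        have h1 : Filter.Tendsto (fun n => ∑ i, (u ∘ φ) n i • Φ i) Filter.atTop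
            (nhds (∑ i, u0 i • Φ i)) := (hLcont.tendsto u0).comp hconv
        have h2 : Filter.Tendsto (fun n => ∑ i, (u ∘ φ) n i • Φ i) Filter.atTop (nhds 0) := by
          have : (fun n => ∑ i, (u ∘ φ) n i • Φ i) = fun n => ‖z (φ n + 1)‖⁻¹ • lam := by
            funext n
            exact hLu (φ n)
          rw [this]
          have := htend0.smul_const lam
          simpa using this
        exact tendsto_nhds_unique h1 h2
      have : u0 ∈ Qcl B ∩ {x : Fin N → ℝ | ∑ i, x i • Φ i = 0} := ⟨hu0Q, hL0⟩
      rw [hV] at this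
      simp only [Set.mem_singleton_iff] at this
      rw [this] at hu0
      simp at hu0
    · intro hbdd
      apply subset_antisymm
      · rintro x ⟨hx1, hx2⟩
        by_contra hx0
        have hxn : 0 < ‖x‖ := by
          simp only [Set.mem_singleton_iff] at hx0
          exact norm_pos_iff.2 hx0
        obtain ⟨r, hr⟩ := isBounded_iff_forall_norm_le.1 (hbdd 0)
        set t : ℝ := (max r 0 + 1) / ‖x‖ with ht
        have htpos : 0 < t := by positivity
        have hmem : t • x ∈ affSlice Φ 0 ∩ Qcl B := by
          constructor
          · show ∑ i, (t • x) i • Φ i = 0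
            have : ∑ i, (t • x) i • Φ i = t • ∑ i, x i • Φ i := by
              rw [Finset.smul_sum]
              exact Finset.sum_congr rfl fun i _ => by simp [smul_smul]
            rw [this, hx2, smul_zero]
          · exact Qcl_smul hx1 htpos.le
        have := hr _ hmem
        rw [norm_smul, Real.norm_of_nonneg htpos.le, ht,
            div_mul_cancel₀ _ (ne_of_gt hxn)] at this
        have : r ≤ max r 0 := le_max_left r 0
        linarith [hr _ hmem, le_max_left r 0,
          (by rw [norm_smul, Real.norm_of_nonneg htpos.le, ht,
            div_mul_cancel₀ _ (ne_of_gt hxn)] : ‖t • x‖ = max r 0 + 1)]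
      · intro x hx
        simp only [Set.mem_singleton_iff] at hx
        subst hx
        refine ⟨⟨fun i _ => le_refl 0, fun i _ => le_refl 0⟩, by simp⟩

end AC
end
end

section
/- Let τ ⊆ c(Φ) be a Φ-tope and B ⊆ {1,…,N}. Assume the semi-open cone c̃(Φ_flip^B) = {Σ_i x_i φ_i : x ∈ Q_neg^B} is disjoint from τ. Then: (i) τ is disjoint from the closed cone c(Φ_flip^B) of nonnegative linear combinations of Φ_flip^B; (ii) the closure of τ is disjoint from c̃(Φ_flip^B); (iii) τ − b(Φ) is disjoint from c̃_ℤ(Φ_flip^B) = {Σ_i x_i φ_i : x ∈ Q_neg^B ∩ ℤ^N}. -/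
open scoped Pointwise
open Classical MvPolynomial

noncomputable section

namespace AC

section Aux

variable {F : Type*} [NormedAddCommGroup F] [NormedSpace ℝ F] [FiniteDimensional ℝ F]
variable {ι : Type*} [Fintype ι]

private lemma exists_ker_eq_span (Φ : ι → F) (S : Finset ι)
    (h1 : S.card + 1 = Module.finrank ℝ F)
    (h2 : LinearIndependent ℝ (fun i : {x // x ∈ S} => Φ i.1)) :
    ∃ ξ : F →ₗ[ℝ] ℝ, LinearMap.ker ξ = Submodule.span ℝ (Φ '' ↑S) := by
  set H := Submodule.span ℝ (Φ '' ↑S) with hH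
  have himg : (Φ '' ↑S) = Set.range (fun i : {x // x ∈ S} => Φ i.1) :=
    Set.image_eq_range _ _
  have hfr : Module.finrank ℝ H = S.card := by
    rw [hH, himg, finrank_span_eq_card h2, Fintype.card_coe]
  have hHne : H ≠ ⊤ := by
    intro htop
    rw [htop, finrank_top] at hfr
    omega
  obtain ⟨v, hv⟩ : ∃ v, v ∉ H := by
    by_contra hc
    push_neg at hc
    exact hHne (Submodule.eq_top_iff'.mpr hc)
  have hqv : H.mkQ v ≠ 0 := by
    rw [Submodule.mkQ_apply, ne_eq, Submodule.Quotient.mk_eq_zero]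
    exact hv
  obtain ⟨g, hg⟩ : ∃ g : Module.Dual ℝ (F ⧸ H), g (H.mkQ v) ≠ 0 := by
    by_contra hc
    push_neg at hc
    exact hqv ((Module.forall_dual_apply_eq_zero_iff ℝ _).mp hc)
  have hQ1 : Module.finrank ℝ (F ⧸ H) = 1 := by
    have := Submodule.finrank_quotient_add_finrank H
    omega
  refine ⟨g.comp H.mkQ, le_antisymm ?_ ?_⟩
  · intro x hx
    have hx0 : g (H.mkQ x) = 0 := hx
    obtain ⟨c, hc⟩ := (finrank_eq_one_iff_of_nonzero' (H.mkQ v) hqv).mp hQ1 (H.mkQ x)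
    have : c * g (H.mkQ v) = 0 := by
      rw [← smul_eq_mul, ← map_smul, hc, hx0]
    have hc0 : c = 0 := by
      rcases mul_eq_zero.mp this with h | h
      · exact h
      · exact absurd h hg
    have : H.mkQ x = 0 := by rw [← hc, hc0, zero_smul]
    rwa [Submodule.mkQ_apply, Submodule.Quotient.mk_eq_zero] at this
  · intro x hx
    have : H.mkQ x = 0 := by
      rw [Submodule.mkQ_apply, Submodule.Quotient.mk_eq_zero]; exact hx
    show g (H.mkQ x) = 0
    rw [this, map_zero]

private lemma tope_open_convex (Φ : ι → F) {τ : Set F} (hτ : IsTope Φ τ) :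
    IsOpen τ ∧ Convex ℝ τ ∧ τ.Nonempty := by
  classical
  obtain ⟨μ, hμ, rfl⟩ := hτ
  set cond := fun S : Finset ι => S.card + 1 = Module.finrank ℝ F ∧
      LinearIndependent ℝ (fun i : {x // x ∈ S} => Φ i.1) with hcond
  have hex : ∀ S : Finset ι, ∃ ξ : F →ₗ[ℝ] ℝ,
      cond S → LinearMap.ker ξ = Submodule.span ℝ (Φ '' ↑S) := by
    intro S
    by_cases h : cond S
    · obtain ⟨ξ, hξ⟩ := exists_ker_eq_span Φ S h.1 h.2
      exact ⟨ξ, fun _ => hξ⟩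
    · exact ⟨0, fun h' => absurd h' h⟩
  choose ξ hξ using hex
  set R := {x : F | IsRegular Φ x} with hRdef
  have hmemR : ∀ x : F, x ∈ R ↔ ∀ S, cond S → ξ S x ≠ 0 := by
    intro x
    constructor
    · intro hx S hS
      have hnot : x ∉ Submodule.span ℝ (Φ '' ↑S) :=
        hx (Submodule.span ℝ (Φ '' ↑S)) ⟨S, hS.1, hS.2, rfl⟩
      intro h0
      exact hnot (by rw [← hξ S hS]; exact h0)
    · rintro hx H ⟨S, h1, h2, rfl⟩ hmem
      exact hx S ⟨h1, h2⟩ (by rw [← LinearMap.mem_ker, hξ S ⟨h1, h2⟩]; exact hmem)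
  have hμR : μ ∈ R := hμ
  set T := {x : F | ∀ S, cond S → 0 < ξ S x * ξ S μ} with hT
  set T' := {x : F | ∃ S, cond S ∧ ξ S x * ξ S μ < 0} with hT'
  have hμT : μ ∈ T := by
    intro S hS
    exact mul_self_pos.mpr ((hmemR μ).mp hμR S hS)
  have hTR : T ⊆ R := by
    intro x hx
    rw [hmemR]
    intro S hS h0
    have := hx S hS
    rw [h0, zero_mul] at this
    exact lt_irrefl _ this
  have hTopen : IsOpen T := by
    have : T = ⋂ S : Finset ι, {x : F | cond S → 0 < ξ S x * ξ S μ} := by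
      ext x; simp [hT, Set.mem_iInter]
    rw [this]
    refine isOpen_iInter_of_finite fun S => ?_
    by_cases h : cond S
    · have he : {x : F | cond S → 0 < ξ S x * ξ S μ} = {x : F | 0 < ξ S x * ξ S μ} :=
        Set.ext fun z => ⟨fun hz => hz h, fun hz _ => hz⟩
      rw [he]
      exact isOpen_lt continuous_const
        (((ξ S).continuous_of_finiteDimensional).mul continuous_const)
    · have he : {x : F | cond S → 0 < ξ S x * ξ S μ} = Set.univ :=
        Set.eq_univ_iff_forall.mpr fun z hc => absurd hc h
      rw [he]; exact isOpen_univ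
  have hT'open : IsOpen T' := by
    have : T' = ⋃ S : Finset ι, {x : F | cond S ∧ ξ S x * ξ S μ < 0} := by
      ext x; simp [hT', Set.mem_iUnion]
    rw [this]
    refine isOpen_iUnion fun S => ?_
    by_cases h : cond S
    · have he : {x : F | cond S ∧ ξ S x * ξ S μ < 0} = {x : F | ξ S x * ξ S μ < 0} :=
        Set.ext fun z => and_iff_right h
      rw [he]
      exact isOpen_lt (((ξ S).continuous_of_finiteDimensional).mul continuous_const)
        continuous_const
    · have he : {x : F | cond S ∧ ξ S x * ξ S μ < 0} = ∅ :=
        Set.eq_empty_iff_forall_notMem.mpr fun z hz => h hz.1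
      rw [he]; exact isOpen_empty
  have hTconv : Convex ℝ T := by
    have : T = ⋂ S : Finset ι, {x : F | cond S → 0 < ξ S x * ξ S μ} := by
      ext x; simp [hT, Set.mem_iInter]
    rw [this]
    refine convex_iInter fun S => ?_
    by_cases h : cond S
    · have he : {x : F | cond S → 0 < ξ S x * ξ S μ} = {x : F | 0 < ξ S x * ξ S μ} :=
        Set.ext fun z => ⟨fun hz => hz h, fun hz _ => hz⟩
      rw [he]
      refine convex_halfSpace_gt ⟨fun a b => ?_, fun c a => ?_⟩ 0
      · simp [map_add, add_mul]
      · simp [map_smul, smul_eq_mul, mul_assoc]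
    · have he : {x : F | cond S → 0 < ξ S x * ξ S μ} = Set.univ :=
        Set.eq_univ_iff_forall.mpr fun z hc => absurd hc h
      rw [he]; exact convex_univ
  have hTT' : Disjoint T T' := by
    rw [Set.disjoint_left]
    rintro x hx ⟨S, hS, hneg⟩
    exact absurd (hx S hS) (not_lt.mpr hneg.le)
  have hRsub : R ⊆ T ∪ T' := by
    intro x hx
    by_cases h : x ∈ T
    · exact Or.inl h
    · right
      rw [hT, Set.mem_setOf_eq] at h
      push_neg at h
      obtain ⟨S, hS, hle⟩ := h
      refine ⟨S, hS, lt_of_le_of_ne hle ?_⟩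
      exact mul_ne_zero ((hmemR x).mp hx S hS) ((hmemR μ).mp hμR S hS)
  have hcompT : connectedComponentIn R μ ⊆ T := by
    refine IsPreconnected.subset_left_of_subset_union hTopen hT'open hTT'
      ((connectedComponentIn_subset R μ).trans hRsub)
      ⟨μ, mem_connectedComponentIn hμR, hμT⟩ isPreconnected_connectedComponentIn
  have hTcomp : T ⊆ connectedComponentIn R μ :=
    hTconv.isPreconnected.subset_connectedComponentIn hμT hTR
  have heq : connectedComponentIn R μ = T := le_antisymm hcompT hTcomp
  rw [heq]
  exact ⟨hTopen, hTconv, ⟨μ, hμT⟩⟩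

end Aux

/-- If the semi-open cone `c̃(Φ_flip^B)` is disjoint from the tope `τ ⊆ c(Φ)`,
then (i) `τ` is disjoint from the closed cone `c(Φ_flip^B)`, (ii) the closure
of `τ` is disjoint from `c̃(Φ_flip^B)`, and (iii) `τ - b(Φ)` is disjoint from
`c̃_ℤ(Φ_flip^B)`. -/
theorem tope_disjoint_flipped_cone
    {F : Type*} [NormedAddCommGroup F] [NormedSpace ℝ F] [FiniteDimensional ℝ F]
    {N : ℕ} (Φ : Fin N → F)
    (hne : ∀ i, Φ i ≠ 0)
    (hgen : Submodule.span ℝ (Set.range Φ) = ⊤)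
    (hsal : ∃ a : F →ₗ[ℝ] ℝ, ∀ i, 0 < a (Φ i))
    (τ : Set F) (hτ : IsTope Φ τ) (hτc : τ ⊆ fullCone Φ)
    (B : Finset (Fin N))
    (hdisj : Disjoint ((fun x : Fin N → ℝ => ∑ i, x i • Φ i) '' Qneg B) τ) :
    Disjoint τ (fullCone (flipSeq Φ B)) ∧
    Disjoint (closure τ) ((fun x : Fin N → ℝ => ∑ i, x i • Φ i) '' Qneg B) ∧
    Disjoint (τ - zonotope Φ)
      ((fun x : Fin N → ℝ => ∑ i, x i • Φ i) '' (Qneg B ∩ {x | isLatticePt x})) := by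
  classical
  obtain ⟨hτo, hτconv, hτne⟩ := tope_open_convex Φ hτ
  obtain ⟨μ₀, hμ₀⟩ := hτne
  obtain ⟨y, hy0, -, hyM⟩ := hτc hμ₀
  have part1 : Disjoint τ (fullCone (flipSeq Φ B)) := by
    rw [Set.disjoint_left]
    rintro v hvτ ⟨c, hc0, -, rfl⟩
    set u := ∑ i ∈ B, Φ i with hu
    obtain ⟨δ, hδ0, hball⟩ := Metric.isOpen_iff.mp hτo _ hvτ
    set ε := δ / (‖u‖ + 1) with hε
    have hε0 : 0 < ε := div_pos hδ0 (by positivity)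
    set x : Fin N → ℝ := fun i => (if i ∈ B then -(c i) - ε else c i) with hx
    have hxQ : x ∈ Qneg B := by
      constructor
      · intro i hi
        have := hc0 i
        simp only [hx, hi, if_true]
        linarith
      · intro i hi
        simp only [hx, hi, if_false]
        exact hc0 i
    have hMx : ∑ i, x i • Φ i = (∑ i, c i • flipSeq Φ B i) - ε • u := by
      have hterm : ∀ i, x i • Φ i =
          c i • flipSeq Φ B i - (if i ∈ B then ε • Φ i else 0) := by
        intro i
        by_cases hi : i ∈ B
        · simp only [hx, hi, if_true, flipSeq, smul_neg, sub_smul, neg_smul]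
        · simp only [hx, hi, if_false, flipSeq, sub_zero]
      rw [Finset.sum_congr rfl fun i _ => hterm i, Finset.sum_sub_distrib]
      
      congr 1
      rw [Fintype.sum_ite_mem, hu, Finset.smul_sum]
    have hw : (∑ i, c i • flipSeq Φ B i) - ε • u ∈ τ := by
      apply hball
      rw [Metric.mem_ball, dist_eq_norm]
      have : (∑ i, c i • flipSeq Φ B i) - ε • u - ∑ i, c i • flipSeq Φ B i = -(ε • u) := by
        abel
      rw [this, norm_neg, norm_smul, Real.norm_eq_abs, abs_of_pos hε0]
      have h1 : ε * ‖u‖ < ε * (‖u‖ + 1) := by nlinarith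
      have h2 : ε * (‖u‖ + 1) = δ := by
        rw [hε]; field_simp
      linarith
    exact Set.disjoint_left.mp hdisj ⟨x, hxQ, hMx⟩ hw
  refine ⟨part1, ?_, ?_⟩
  · rw [Set.disjoint_left]
    rintro lam hcl ⟨x, ⟨hxB, hxnB⟩, hMx0⟩
    have hMx : (∑ i, x i • Φ i) = lam := hMx0
    rcases B.eq_empty_or_nonempty with hBe | hBne
    · exact Set.disjoint_left.mp hdisj
        ⟨y, ⟨by simp [hBe], fun i _ => hy0 i⟩, hyM.symm⟩ hμ₀
    set f : Fin N → ℝ := fun i => (-x i) / (2 * (|y i - x i| + 1)) with hf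
    set t : ℝ := min (B.inf' hBne f) (1/2) with ht
    have ht0 : 0 < t := by
      apply lt_min
      · rw [Finset.lt_inf'_iff]
        intro i hi
        have := hxB i hi
        apply div_pos (by linarith) (by positivity)
      · norm_num
    have ht1 : t ≤ 1 := le_trans (min_le_right _ _) (by norm_num)
    have hkey : ∀ i ∈ B, x i + t * (y i - x i) < 0 := by
      intro i hi
      have h1 : t ≤ f i := le_trans (min_le_left _ _) (Finset.inf'_le f hi)
      have habs : 0 < |y i - x i| + 1 := by positivity
      have h3 : f i * (|y i - x i| + 1) = (-x i) / 2 := by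
        rw [hf]
        field_simp
      have h2 : t * (y i - x i) ≤ (-x i) / 2 := by
        calc t * (y i - x i) ≤ t * (|y i - x i| + 1) := by
              apply mul_le_mul_of_nonneg_left _ ht0.le
              have := le_abs_self (y i - x i)
              linarith
          _ ≤ f i * (|y i - x i| + 1) := mul_le_mul_of_nonneg_right h1 habs.le
          _ = (-x i) / 2 := h3
      have := hxB i hi
      linarith
    set z : Fin N → ℝ := fun i => x i + t * (y i - x i) with hz
    have hzQ : z ∈ Qneg B := by
      constructor
      · intro i hi; exact hkey i hi
      · intro i hi
        have h1 := hxnB i hi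
        have h2 := hy0 i
        show 0 ≤ x i + t * (y i - x i)
        nlinarith
    have hMz : ∑ i, z i • Φ i = lam + t • (μ₀ - lam) := by
      have hterm : ∀ i, z i • Φ i = x i • Φ i + t • (y i • Φ i - x i • Φ i) := by
        intro i
        show (x i + t * (y i - x i)) • Φ i = _
        module
      rw [Finset.sum_congr rfl fun i _ => hterm i, Finset.sum_add_distrib,
        ← Finset.smul_sum, Finset.sum_sub_distrib, hMx, ← hyM]
    have hp : lam + t • (μ₀ - lam) ∈ τ := by
      have := hτconv.add_smul_sub_mem_interior' hcl
        (by rw [hτo.interior_eq]; exact hμ₀) ⟨ht0, ht1⟩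
      rwa [hτo.interior_eq] at this
    exact Set.disjoint_left.mp hdisj ⟨z, hzQ, hMz⟩ hp
  · rw [Set.disjoint_left]
    intro v hv hv'
    obtain ⟨x, ⟨⟨hxB, hxnB⟩, hlat⟩, hMx0⟩ := hv'
    have hMx : (∑ i, x i • Φ i) = v := hMx0
    obtain ⟨a, ha, b, hb, hab⟩ := Set.mem_sub.mp hv
    obtain ⟨s, hs01, hbs⟩ := hb
    have hxle : ∀ i ∈ B, x i ≤ -1 := by
      intro i hi
      obtain ⟨n, hn⟩ := hlat i
      have hneg : (n : ℝ) < 0 := by rw [← hn]; exact hxB i hi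
      have : n < 0 := by exact_mod_cast hneg
      have : n ≤ -1 := by omega
      rw [hn]
      exact_mod_cast this
    set c : Fin N → ℝ := fun i => if i ∈ B then -(x i + s i) else x i + s i with hc
    have hc0 : ∀ i, 0 ≤ c i := by
      intro i
      by_cases hi : i ∈ B
      · simp only [hc, hi, if_true]
        have h1 := hxle i hi
        have h2 := (hs01 i).2
        linarith
      · simp only [hc, hi, if_false]
        have h1 := hxnB i hi
        have h2 := (hs01 i).1
        linarith
    have haC : a ∈ fullCone (flipSeq Φ B) := by
      refine ⟨c, hc0, fun i h => absurd (Set.mem_univ i) h, ?_⟩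
      have hterm : ∀ i, c i • flipSeq Φ B i = (x i + s i) • Φ i := by
        intro i
        by_cases hi : i ∈ B
        · simp only [hc, hi, if_true, flipSeq, smul_neg, neg_smul, neg_neg]
        · simp only [hc, hi, if_false, flipSeq]
      rw [Finset.sum_congr rfl fun i _ => hterm i]
      have : a = (a - b) + b := by abel
      rw [this, hab, ← hMx, hbs]
      rw [← Finset.sum_add_distrib]
      exact Finset.sum_congr rfl fun i _ => (add_smul _ _ _).symm
    exact Set.disjoint_left.mp part1 ha haC

end AC
end
end

section
/- Let τ ⊆ c(Φ) be a Φ-tope and let (z_B)_{B ⊆ {1,…,N}} be rational numbers such that Σ_B z_B · [Q_neg^B](x) = [p(Φ,λ)](x) for every λ ∈ τ and every x ∈ V(Φ,λ). Then: (i) z_∅ = 1; (ii) the same identity Σ_B z_B · [Q_neg^B](x) = [p(Φ,λ)](x) for all x ∈ V(Φ,λ) holds for every λ in the closure of τ; (iii) for every λ ∈ τ − b(Φ), one has Σ_B z_B · [Q_neg^B](x) = [p(Φ,λ)](x) for all x ∈ V(Φ,λ) ∩ ℤ^N. -/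
open scoped Pointwise
open Classical MvPolynomial

noncomputable section

namespace AC

section AuxContinuity

variable {F : Type*} [NormedAddCommGroup F] [NormedSpace ℝ F] [FiniteDimensional ℝ F]

lemma aux_exists_ker (H : Submodule ℝ F) (hH : Module.finrank ℝ (F ⧸ H) = 1) :
    ∃ ξ : F →ₗ[ℝ] ℝ, ∀ x, ξ x = 0 ↔ x ∈ H := by
  obtain ⟨e⟩ := FiniteDimensional.nonempty_linearEquiv_of_finrank_eq
    (show Module.finrank ℝ (F ⧸ H) = Module.finrank ℝ ℝ by simpa using hH)
  refine ⟨e.toLinearMap ∘ₗ H.mkQ, fun x => ?_⟩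
  rw [LinearMap.comp_apply, LinearEquiv.coe_coe, Submodule.mkQ_apply,
    LinearEquiv.map_eq_zero_iff, Submodule.Quotient.mk_eq_zero]

lemma tope_isOpen_convex {N : ℕ} (Φ : Fin N → F) (τ : Set F) (hτ : IsTope Φ τ) :
    IsOpen τ ∧ Convex ℝ τ := by
  obtain ⟨μ, hμ, rfl⟩ := hτ
  set U : Set F := {x | IsRegular Φ x} with hU
  set K : Finset (Fin N) → Prop := fun S =>
    S.card + 1 = Module.finrank ℝ F ∧
      LinearIndependent ℝ (fun i : {x // x ∈ S} => Φ i.1) with hK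
  have hker : ∀ S : Finset (Fin N), K S → ∃ ξ : F →ₗ[ℝ] ℝ,
      ∀ x, ξ x = 0 ↔ x ∈ Submodule.span ℝ (Φ '' ↑S) := by
    rintro S ⟨hc, hi⟩
    apply aux_exists_ker
    have h1 : Module.finrank ℝ (Submodule.span ℝ (Φ '' (↑S : Set (Fin N)))) = S.card := by
      have himg : Φ '' (↑S : Set (Fin N)) = Set.range (fun i : {x // x ∈ S} => Φ i.1) := by
        ext v; simp
      rw [himg, finrank_span_eq_card hi, Fintype.card_coe]
    have h2 := Submodule.finrank_quotient_add_finrank (Submodule.span ℝ (Φ '' (↑S : Set (Fin N))))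
    omega
  choose ξ hξ using hker
  have hreg : ∀ x, IsRegular Φ x ↔ ∀ S, (h : K S) → ξ S h x ≠ 0 := by
    intro x
    constructor
    · intro hx S hS h0
      exact hx (Submodule.span ℝ (Φ '' ↑S)) ⟨S, hS.1, hS.2, rfl⟩ ((hξ S hS x).1 h0)
    · rintro h H ⟨S, h1, h2, rfl⟩ hmem
      exact h S ⟨h1, h2⟩ ((hξ S ⟨h1, h2⟩ x).2 hmem)
  set C : Set F := {x | ∀ S, (h : K S) → 0 < ξ S h x * ξ S h μ} with hC
  have hCopen : IsOpen C := by
    have : C = ⋂ S, ⋂ (h : K S), {x | 0 < ξ S h x * ξ S h μ} := by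
      ext x; simp [hC]
    rw [this]
    refine isOpen_iInter_of_finite fun S => isOpen_iInter_of_finite fun h => ?_
    exact isOpen_lt continuous_const
      (((ξ S h).continuous_of_finiteDimensional).mul continuous_const)
  have hCconv : Convex ℝ C := by
    intro x hx y hy a b ha hb hab
    intro S h
    have hx' := hx S h
    have hy' := hy S h
    have hlin : ξ S h (a • x + b • y) = a * ξ S h x + b * ξ S h y := by
      simp [map_add, map_smul]
    have key : 0 < a * (ξ S h x * ξ S h μ) + b * (ξ S h y * ξ S h μ) := by
      rcases ha.lt_or_eq with hpos | h0
      · exact add_pos_of_pos_of_nonneg (mul_pos hpos hx') (mul_nonneg hb hy'.le)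
      · have hb1 : b = 1 := by linarith
        simpa [← h0, hb1] using hy'
    calc (0:ℝ) < a * (ξ S h x * ξ S h μ) + b * (ξ S h y * ξ S h μ) := key
      _ = ξ S h (a • x + b • y) * ξ S h μ := by rw [hlin]; ring
  have hCU : C ⊆ U := fun x hx => (hreg x).2 fun S h h0 => by
    have := hx S h; rw [h0] at this; simp at this
  have hμC : μ ∈ C := fun S h => mul_self_pos.2 ((hreg μ).1 hμ S h)
  have hμU : μ ∈ U := hμ
  have hCτ : C ⊆ connectedComponentIn U μ :=
    (hCconv.isPreconnected).subset_connectedComponentIn hμC hCU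
  have hτC : connectedComponentIn U μ ⊆ C := by
    intro x hx S h
    set f := ξ S h with hf
    have hsub := connectedComponentIn_subset U μ
    have hpre : IsPreconnected (f '' connectedComponentIn U μ) :=
      (isPreconnected_connectedComponentIn).image f
        (f.continuous_of_finiteDimensional).continuousOn
    have hμmem : μ ∈ connectedComponentIn U μ := mem_connectedComponentIn hμU
    have hx0 : f x ≠ 0 := (hreg x).1 (hsub hx) S h
    have hμ0 : f μ ≠ 0 := (hreg μ).1 hμ S h
    by_contra hle
    push_neg at hle
    have h0 : (0 : ℝ) ∈ f '' connectedComponentIn U μ := by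
      have hord := hpre.ordConnected
      rcases lt_or_gt_of_ne hx0 with hneg | hpos
      · have hp : 0 < f μ := by
          rcases lt_or_gt_of_ne hμ0 with hn | hp
          · nlinarith
          · exact hp
        exact hord.out ⟨x, hx, rfl⟩ ⟨μ, hμmem, rfl⟩ ⟨hneg.le, hp.le⟩
      · have hp : f μ < 0 := by
          rcases lt_or_gt_of_ne hμ0 with hn | hp
          · exact hn
          · nlinarith
        exact hord.out ⟨μ, hμmem, rfl⟩ ⟨x, hx, rfl⟩ ⟨hp.le, hpos.le⟩
    obtain ⟨w, hw, hw0⟩ := h0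
    exact (hreg w).1 (hsub hw) S h hw0
  have heq : connectedComponentIn U μ = C := le_antisymm hτC hCτ
  rw [heq]
  exact ⟨hCopen, hCconv⟩

end AuxContinuity

/-- Continuity properties of decompositions into quadrants: if
`∑_B z_B [Q_neg^B] = [p(Φ,λ)]` on `V(Φ,λ)` for every `λ ∈ τ`, then
(i) `z_∅ = 1`, (ii) the same identity holds for every `λ` in the closure of
`τ`, and (iii) it holds on lattice points of `V(Φ,λ)` for `λ ∈ τ - b(Φ)`. -/


theorem quadrant_decomposition_continuity
    {F : Type*} [NormedAddCommGroup F] [NormedSpace ℝ F] [FiniteDimensional ℝ F]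
    {N : ℕ} (Φ : Fin N → F)
    (hne : ∀ i, Φ i ≠ 0)
    (hgen : Submodule.span ℝ (Set.range Φ) = ⊤)
    (hsal : ∃ a : F →ₗ[ℝ] ℝ, ∀ i, 0 < a (Φ i))
    (τ : Set F) (hτ : IsTope Φ τ) (hτc : τ ⊆ fullCone Φ)
    (z : Finset (Fin N) → ℚ)
    (hz : ∀ lam ∈ τ, ∀ x ∈ affSlice Φ lam,
      ∑ B : Finset (Fin N), (z B : ℝ) * charFn (Qneg B) x = charFn (partPoly Φ lam) x) :
    z ∅ = 1 ∧
    (∀ lam ∈ closure τ, ∀ x ∈ affSlice Φ lam,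
      ∑ B : Finset (Fin N), (z B : ℝ) * charFn (Qneg B) x = charFn (partPoly Φ lam) x) ∧
    (∀ lam ∈ τ - zonotope Φ, ∀ x ∈ affSlice Φ lam, isLatticePt x →
      ∑ B : Finset (Fin N), (z B : ℝ) * charFn (Qneg B) x = charFn (partPoly Φ lam) x) := by
  classical
  obtain ⟨hopen, hconv⟩ := tope_isOpen_convex Φ τ hτ
  obtain ⟨μ₀, hμ₀reg, hτeq⟩ := hτ
  have hμ₀τ : μ₀ ∈ τ := by rw [hτeq]; exact mem_connectedComponentIn hμ₀reg
  set neg : (Fin N → ℝ) → Finset (Fin N) :=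
    fun x => Finset.univ.filter (fun i => x i < 0) with hnegdef
  have hmemneg : ∀ (x : Fin N → ℝ) i, i ∈ neg x ↔ x i < 0 := by
    intro x i; simp [hnegdef]
  have hQ : ∀ (B : Finset (Fin N)) (x : Fin N → ℝ), x ∈ Qneg B ↔ B = neg x := by
    intro B x
    constructor
    · rintro ⟨h1, h2⟩
      ext i
      constructor
      · intro hi; exact (hmemneg x i).2 (h1 i hi)
      · intro hi
        by_contra hiB
        exact absurd ((hmemneg x i).1 hi) (not_lt.2 (h2 i hiB))
    · rintro rfl
      exact ⟨fun i hi => (hmemneg x i).1 hi,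
        fun i hi => le_of_not_gt fun h => hi ((hmemneg x i).2 h)⟩
  have hsum : ∀ x : Fin N → ℝ,
      ∑ B : Finset (Fin N), (z B : ℝ) * charFn (Qneg B) x = (z (neg x) : ℝ) := by
    intro x
    rw [Finset.sum_eq_single (neg x)]
    · rw [charFn, if_pos ((hQ _ x).2 rfl), mul_one]
    · intro B _ hB
      rw [charFn, if_neg (fun hmem => hB ((hQ B x).1 hmem)), mul_zero]
    · intro h; exact absurd (Finset.mem_univ _) h
  have hpart : ∀ (lam : F) (x : Fin N → ℝ), x ∈ affSlice Φ lam →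
      charFn (partPoly Φ lam) x = if neg x = ∅ then (1:ℝ) else 0 := by
    intro lam x hx
    by_cases h : neg x = ∅
    · rw [if_pos h, charFn, if_pos]
      refine ⟨fun i => ?_, hx⟩
      have hi : i ∉ neg x := by simp [h]
      exact le_of_not_gt fun hlt => hi ((hmemneg x i).2 hlt)
    · rw [if_neg h, charFn, if_neg]
      rintro ⟨h1, -⟩
      refine h (Finset.eq_empty_of_forall_notMem fun i hi => ?_)
      exact absurd ((hmemneg x i).1 hi) (not_lt.2 (h1 i))
  have key : ∀ lam ∈ τ, ∀ x : Fin N → ℝ, x ∈ affSlice Φ lam →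
      (z (neg x) : ℝ) = if neg x = ∅ then (1:ℝ) else 0 := by
    intro lam hlam x hx
    have h := hz lam hlam x hx
    rwa [hsum x, hpart lam x hx] at h
  obtain ⟨c₀, hc₀0, -, hc₀⟩ := hτc hμ₀τ
  have hnegc₀ : neg c₀ = ∅ := Finset.eq_empty_of_forall_notMem fun i hi =>
    absurd ((hmemneg c₀ i).1 hi) (not_lt.2 (hc₀0 i))
  have hz1 : (z ∅ : ℝ) = 1 := by
    have h := key μ₀ hμ₀τ c₀ hc₀.symm
    rwa [hnegc₀, if_pos rfl] at h
  refine ⟨by exact_mod_cast hz1, ?_, ?_⟩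
  · -- part (ii)
    intro lam hlam x hx
    rw [hsum x, hpart lam x hx]
    by_cases hB : neg x = ∅
    · rw [if_pos hB, hB]; exact hz1
    · rw [if_neg hB]
      have hBne : (neg x).Nonempty := Finset.nonempty_iff_ne_empty.2 hB
      set δ : ℝ := (neg x).inf' hBne (fun i => -(x i)) with hδdef
      have hδpos : 0 < δ := by
        rw [hδdef, Finset.lt_inf'_iff]
        intro i hi
        have := (hmemneg x i).1 hi
        linarith
      set M : ℝ := (neg x).sup' hBne (fun i => c₀ i - x i) with hMdef
      have hMpos : 0 < M := by
        rw [hMdef, Finset.lt_sup'_iff]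
        obtain ⟨i, hi⟩ := hBne
        refine ⟨i, hi, ?_⟩
        have h1 := (hmemneg x i).1 hi
        have h2 := hc₀0 i
        linarith
      set s : ℝ := min (1/2) (δ / (2 * M)) with hsdef
      have hs0 : 0 < s := lt_min (by norm_num) (div_pos hδpos (by linarith))
      have hs1 : s < 1 := lt_of_le_of_lt (min_le_left _ _) (by norm_num)
      set y : Fin N → ℝ := fun i => (1 - s) * x i + s * c₀ i with hydef
      have hyB : ∀ i ∈ neg x, y i < 0 := by
        intro i hi
        have hxi : x i ≤ -δ := by
          have h := Finset.inf'_le (fun i => -(x i)) hi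
          rw [← hδdef] at h
          linarith
        have hci : c₀ i - x i ≤ M := by
          have h := Finset.le_sup' (fun i => c₀ i - x i) hi
          rwa [← hMdef] at h
        have hsM : s * M ≤ δ / 2 := by
          have h : s ≤ δ / (2 * M) := min_le_right _ _
          calc s * M ≤ (δ / (2 * M)) * M := by nlinarith
            _ = δ / 2 := by field_simp
        have hy1 : y i = x i + s * (c₀ i - x i) := by rw [hydef]; ring
        have h2 : s * (c₀ i - x i) ≤ s * M := by nlinarith
        nlinarith
      have hyB' : ∀ i ∉ neg x, 0 ≤ y i := by
        intro i hi
        have hxi : 0 ≤ x i := le_of_not_gt fun h => hi ((hmemneg x i).2 h)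
        have h1 : (0:ℝ) ≤ (1 - s) * x i := mul_nonneg (by linarith) hxi
        have h2 : (0:ℝ) ≤ s * c₀ i := mul_nonneg hs0.le (hc₀0 i)
        simp only [hydef]
        linarith
      have hnegy : neg y = neg x := by
        ext i
        constructor
        · intro hi
          by_contra hiB
          exact absurd ((hmemneg y i).1 hi) (not_lt.2 (hyB' i hiB))
        · intro hi; exact (hmemneg y i).2 (hyB i hi)
      have hyaff : y ∈ affSlice Φ ((1 - s) • lam + s • μ₀) := by
        show ∑ i, y i • Φ i = _
        have hterm : ∀ i, y i • Φ i = (1 - s) • (x i • Φ i) + s • (c₀ i • Φ i) := by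
          intro i; simp only [hydef]; rw [add_smul, mul_smul, mul_smul]
        rw [Finset.sum_congr rfl (fun i _ => hterm i), Finset.sum_add_distrib,
          ← Finset.smul_sum, ← Finset.smul_sum, hx, ← hc₀]
      have hlam_s : (1 - s) • lam + s • μ₀ ∈ τ := by
        have hseg := hconv.openSegment_interior_closure_subset_interior
          (by rwa [hopen.interior_eq]) hlam
        have hmem : s • μ₀ + (1 - s) • lam ∈ openSegment ℝ μ₀ lam :=
          ⟨s, 1 - s, hs0, by linarith, by ring, rfl⟩
        have h := hseg hmem
        rw [hopen.interior_eq] at h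
        rwa [add_comm] at h
      have h := key _ hlam_s y hyaff
      rwa [hnegy, if_neg hB] at h
  · -- part (iii)
    intro lam hlam x hx hxlat
    rw [hsum x, hpart lam x hx]
    obtain ⟨μ, hμτ, v, hv, hμv⟩ := Set.mem_sub.1 hlam
    obtain ⟨t, ht, hvdef⟩ := hv
    obtain ⟨δ, hδpos, hball⟩ := Metric.isOpen_iff.1 hopen μ hμτ
    set ε : ℝ := min (1/2) (δ / (2 * (‖v‖ + 1))) with hεdef
    have hεpos : 0 < ε := lt_min (by norm_num) (div_pos hδpos (by positivity))
    have hε1 : ε ≤ 1/2 := min_le_left _ _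
    have hμε : μ - ε • v ∈ τ := by
      apply hball
      rw [Metric.mem_ball, dist_eq_norm]
      have he : μ - ε • v - μ = -(ε • v) := by abel
      rw [he, norm_neg, norm_smul, Real.norm_eq_abs, abs_of_pos hεpos]
      have h1 : ε ≤ δ / (2 * (‖v‖ + 1)) := min_le_right _ _
      have h2 : ε * ‖v‖ ≤ (δ / (2 * (‖v‖ + 1))) * ‖v‖ := by nlinarith [norm_nonneg v]
      have h3 : (δ / (2 * (‖v‖ + 1))) * ‖v‖ < δ := by
        rw [div_mul_eq_mul_div, div_lt_iff₀ (by positivity)]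
        nlinarith [norm_nonneg v]
      linarith
    set y : Fin N → ℝ := fun i => x i + (1 - ε) * t i with hydef
    have hyaff : y ∈ affSlice Φ (μ - ε • v) := by
      show ∑ i, y i • Φ i = _
      have hterm : ∀ i, y i • Φ i = x i • Φ i + (1 - ε) • (t i • Φ i) := by
        intro i; simp only [hydef]; rw [add_smul, mul_smul]
      rw [Finset.sum_congr rfl (fun i _ => hterm i), Finset.sum_add_distrib,
        ← Finset.smul_sum, hx, ← hvdef, ← hμv]
      module
    have hnegy : neg y = neg x := by
      ext i
      simp only [hmemneg]
      constructor
      · intro hyi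
        by_contra hxi
        push_neg at hxi
        have h1 := (ht i).1
        simp only [hydef] at hyi
        nlinarith
      · intro hxi
        obtain ⟨n, hn⟩ := hxlat i
        have hn0 : n < 0 := by
          have : (n:ℝ) < 0 := hn ▸ hxi
          exact_mod_cast this
        have hn1 : (n:ℝ) ≤ -1 := by
          have : n ≤ -1 := by omega
          exact_mod_cast this
        have hxle : x i ≤ -1 := by rw [hn]; exact hn1
        have h2 := (ht i).2
        simp only [hydef]
        nlinarith
    have h := key _ hμε y hyaff
    rwa [hnegy] at h


end AC
end
end

section
/- For every Φ-tope τ ⊆ c(Φ) and every Φ-regular linear form β on ℝ^N, the combinatorial Lawrence–Varchenko function equals the combinatorial Brianchon–Gram function: Y(Φ,τ,β) = X(Φ,τ) as polynomials in ℤ[p_1,…,p_N,q_1,…,q_N]. -/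
open scoped Pointwise
open Classical MvPolynomial

noncomputable section

namespace AC

section AuxLemmas

variable {F : Type*} [NormedAddCommGroup F] [NormedSpace ℝ F] [FiniteDimensional ℝ F]
variable {N : ℕ} {Φ : Fin N → F}

/-- Elements of the span of the coordinate vectors indexed by `K` vanish off `K`. -/
lemma coord_zero_of_mem_span_single {K : Finset (Fin N)} {w : Fin N → ℝ}
    (hw : w ∈ Submodule.span ℝ ((fun i => (Pi.single i 1 : Fin N → ℝ)) '' ↑K))
    {l : Fin N} (hl : l ∉ K) : w l = 0 := by
  induction hw using Submodule.span_induction with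
  | mem x hx =>
    obtain ⟨i, hi, rfl⟩ := hx
    exact Pi.single_eq_of_ne (fun h => hl (Finset.mem_coe.mp (by rw [h]; exact hi))) 1
  | zero => rfl
  | add x y _ _ hx hy => simp [hx, hy]
  | smul c x _ hx => simp [hx]

lemma sum_single_smul (x : Fin N → ℝ) :
    ∑ i, x i • (Pi.single i 1 : Fin N → ℝ) = x := by
  ext l
  rw [Finset.sum_apply]
  simp [Pi.single_apply]

/-- In a salient configuration, a nonnegative combination equal to zero is trivial. -/
lemma eq_zero_of_nonneg_comb {a : F →ₗ[ℝ] ℝ} (ha : ∀ i, 0 < a (Φ i)) {y : Fin N → ℝ}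
    (hy : ∀ i, 0 ≤ y i) (h0 : ∑ i, y i • Φ i = 0) : y = 0 := by
  have h : ∑ i, y i * a (Φ i) = 0 := by
    have h1 := congrArg a h0
    simpa [map_sum, map_smul, smul_eq_mul] using h1
  have hz := (Finset.sum_eq_zero_iff_of_nonneg
    (fun i _ => mul_nonneg (hy i) (ha i).le)).mp h
  funext i
  have hi := hz i (Finset.mem_univ i)
  rcases mul_eq_zero.mp hi with h' | h'
  · exact h'
  · exact absurd h' (ne_of_gt (ha i))

/-- A linearly independent finset inside `range Φ` of size `< finrank` extends to one
of size `finrank - 1`. -/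
lemma exists_indep_extend (hgen : Submodule.span ℝ (Set.range Φ) = ⊤) :
    ∀ (k : ℕ) (t : Finset F), ↑t ⊆ Set.range Φ →
      (LinearIndependent ℝ ((↑) : (↑t : Set F) → F)) →
      t.card + 1 + k = Module.finrank ℝ F →
      ∃ t' : Finset F, t ⊆ t' ∧ ↑t' ⊆ Set.range Φ ∧
        (LinearIndependent ℝ ((↑) : (↑t' : Set F) → F)) ∧
        t'.card + 1 = Module.finrank ℝ F := by
  intro k
  induction k with
  | zero => exact fun t htr hind hcard => ⟨t, subset_rfl, htr, hind, hcard⟩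
  | succ k ih =>
    intro t htr hind hcard
    have hlt : t.card < Module.finrank ℝ F := by omega
    have hspan : ∃ i, Φ i ∉ Submodule.span ℝ (↑t : Set F) := by
      by_contra h
      push_neg at h
      have hr : Set.range Φ ⊆ (Submodule.span ℝ (↑t : Set F) : Set F) := by
        rintro _ ⟨i, rfl⟩; exact h i
      have htop : Submodule.span ℝ (↑t : Set F) = ⊤ :=
        top_le_iff.mp (by rw [← hgen]; exact Submodule.span_le.mpr hr)
      have h2 := finrank_span_le_card (R := ℝ) (↑t : Set F)
      rw [htop, finrank_top] at h2
      simp only [Finset.toFinset_coe] at h2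
      omega
    obtain ⟨i, hi⟩ := hspan
    have hnotmem : Φ i ∉ t := fun h => hi (Submodule.subset_span h)
    have hins : LinearIndependent ℝ ((↑) : (↑(insert (Φ i) t) : Set F) → F) := by
      rw [Finset.coe_insert]
      exact LinearIndepOn.id_insert hind hi
    have hcard' : (insert (Φ i) t).card + 1 + k = Module.finrank ℝ F := by
      rw [Finset.card_insert_of_notMem hnotmem]; omega
    obtain ⟨t', ht1, ht2, ht3, ht4⟩ := ih (insert (Φ i) t)
      (by rw [Finset.coe_insert]; exact Set.insert_subset ⟨i, rfl⟩ htr) hins hcard'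
    exact ⟨t', (Finset.subset_insert _ t).trans ht1, ht2, ht3, ht4⟩

/-- A regular vector does not lie in the span of fewer than `finrank` independent
members of `Φ`. -/
lemma not_regular_of_small (hgen : Submodule.span ℝ (Set.range Φ) = ⊤)
    {S : Finset (Fin N)}
    (hind : LinearIndependent ℝ (fun i : {x // x ∈ S} => Φ i.1))
    (hcard : S.card < Module.finrank ℝ F) {lam : F}
    (hmem : lam ∈ Submodule.span ℝ (Φ '' ↑S)) : ¬ IsRegular Φ lam := by
  intro hreg
  have hind' : LinearIndependent ℝ (fun x : (↑S : Set (Fin N)) => Φ ↑x) := hind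
  have himg := LinearIndepOn.id_image (R := ℝ) (v := Φ) (s := (↑S : Set (Fin N))) hind'
  have hinj : Set.InjOn Φ ↑S := by
    intro i hi j hj hij
    have h2 : (fun x : (↑S : Set (Fin N)) => Φ ↑x) ⟨i, hi⟩
        = (fun x : (↑S : Set (Fin N)) => Φ ↑x) ⟨j, hj⟩ := hij
    exact congrArg Subtype.val (hind'.injective h2)
  set t : Finset F := S.image Φ with ht
  have hct : (↑t : Set F) = Φ '' ↑S := Finset.coe_image
  have htind : LinearIndependent ℝ ((↑) : (↑t : Set F) → F) := by rw [hct]; exact himg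
  have htr : (↑t : Set F) ⊆ Set.range Φ := by
    rw [hct]; rintro _ ⟨i, _, rfl⟩; exact ⟨i, rfl⟩
  have htcard : t.card < Module.finrank ℝ F :=
    lt_of_le_of_lt (Finset.card_image_le) hcard
  obtain ⟨k, hk⟩ := Nat.exists_eq_add_of_le (Nat.succ_le_of_lt htcard)
  obtain ⟨t', ht1, ht2, ht3, ht4⟩ := exists_indep_extend hgen k t htr htind
    (by omega)
  have hch : ∀ v ∈ t', ∃ i, Φ i = v := fun v hv => ht2 hv
  set S' : Finset (Fin N) :=
    t'.attach.image (fun v => Classical.choose (hch v.1 v.2)) with hS'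
  have hidx : ∀ v (hv : v ∈ t'), Φ (Classical.choose (hch v hv)) = v :=
    fun v hv => Classical.choose_spec (hch v hv)
  have hmemS' : ∀ i ∈ S', ∃ v : {x // x ∈ t'}, Classical.choose (hch v.1 v.2) = i := by
    intro i hi
    rw [hS', Finset.mem_image] at hi
    obtain ⟨v, _, hv⟩ := hi
    exact ⟨v, hv⟩
  have himg2 : Φ '' ↑S' = ↑t' := by
    apply Set.Subset.antisymm
    · rintro _ ⟨i, hi, rfl⟩
      obtain ⟨v, hv⟩ := hmemS' i hi
      have hv' : Classical.choose (hch v.1 v.2) = i := hv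
      rw [← hv', hidx v.1 v.2]
      exact v.2
    · intro v hv
      refine ⟨Classical.choose (hch v hv), ?_, hidx v hv⟩
      rw [hS']
      simp only [Finset.coe_image, Set.mem_image]
      exact ⟨⟨v, hv⟩, by simp, rfl⟩
  have hScard : S'.card = t'.card := by
    rw [hS']
    rw [Finset.card_image_of_injOn, Finset.card_attach]
    intro v _ w _ hvw
    have hvw' : Classical.choose (hch v.1 v.2) = Classical.choose (hch w.1 w.2) := hvw
    have h3 : Φ (Classical.choose (hch v.1 v.2)) = Φ (Classical.choose (hch w.1 w.2)) := by
      rw [hvw']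
    rw [hidx v.1 v.2, hidx w.1 w.2] at h3
    exact Subtype.ext h3
  have hS'ind : LinearIndependent ℝ (fun i : {x // x ∈ S'} => Φ i.1) := by
    have hg : ∀ i : {x // x ∈ S'}, Φ i.1 ∈ (↑t' : Set F) := by
      intro i
      have : Φ i.1 ∈ Φ '' ↑S' := ⟨i.1, i.2, rfl⟩
      rw [himg2] at this
      exact this
    have hcomp := ht3.comp (fun i : {x // x ∈ S'} => (⟨Φ i.1, hg i⟩ : (↑t' : Set F)))
      (by
        intro i j hij
        have hΦ : Φ i.1 = Φ j.1 := congrArg Subtype.val hij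
        obtain ⟨v, hv⟩ := hmemS' i.1 i.2
        obtain ⟨w, hw⟩ := hmemS' j.1 j.2
        have hvi : Φ i.1 = v.1 := by rw [← hv, hidx v.1 v.2]
        have hwj : Φ j.1 = w.1 := by rw [← hw, hidx w.1 w.2]
        have : v = w := Subtype.ext (by rw [← hvi, ← hwj, hΦ])
        apply Subtype.ext
        rw [← hv, ← hw, this])
    exact hcomp
  have hwall : IsWall Φ (Submodule.span ℝ (Φ '' ↑S')) :=
    ⟨S', by rw [hScard]; exact ht4, hS'ind, rfl⟩
  apply hreg _ hwall
  rw [himg2]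
  have hsub : Submodule.span ℝ (Φ '' ↑S) ≤ Submodule.span ℝ (↑t' : Set F) := by
    apply Submodule.span_mono
    rw [← hct]
    exact Finset.coe_subset.mpr ht1
  exact hsub hmem

lemma IsBasic.card_eq {K : Finset (Fin N)} (hK : IsBasic Φ K) :
    K.card = Module.finrank ℝ F := by
  have hr : Set.range (fun i : {x // x ∈ K} => Φ i.1) = Φ '' ↑K := by
    ext v
    simp [Set.mem_image, Set.mem_range, Subtype.exists]
  have b : Module.Basis {x // x ∈ K} ℝ F := Module.Basis.mk hK.1 (by rw [hr, hK.2])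
  rw [Module.finrank_eq_card_basis b]
  exact (Fintype.card_coe K).symm

lemma IsBasic.coeffs_eq_zero {K : Finset (Fin N)} (hK : IsBasic Φ K)
    {w : Fin N → ℝ} (hsupp : ∀ l, l ∉ K → w l = 0)
    (h0 : ∑ i, w i • Φ i = 0) : w = 0 := by
  have hsum : ∑ i ∈ K, w i • Φ i = 0 := by
    rw [← h0]
    apply Finset.sum_subset (Finset.subset_univ K)
    intro i _ hi
    rw [hsupp i hi, zero_smul]
  have hsub : ∑ i : {x // x ∈ K}, w i.1 • Φ i.1 = 0 := by
    rw [Finset.sum_coe_sort K (fun i => w i • Φ i)]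
    exact hsum
  have hz := Fintype.linearIndependent_iff.mp hK.1 (fun i => w i.1) hsub
  funext l
  by_cases hl : l ∈ K
  · exact hz ⟨l, hl⟩
  · exact hsupp l hl

lemma coneOf_mono {I I' : Finset (Fin N)} (h : I ⊆ I') :
    coneOf Φ (↑I : Set (Fin N)) ⊆ coneOf Φ ↑I' := by
  rintro v ⟨c, h1, h2, h3⟩
  exact ⟨c, h1, fun i hi => h2 i
    (fun hmem => hi (Finset.mem_coe.mpr (h (Finset.mem_coe.mp hmem)))), h3⟩

section Rho

variable (ρ : Finset (Fin N) → (Fin N → ℝ) →ₗ[ℝ] (Fin N → ℝ))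
variable (hρ : ∀ K : Finset (Fin N), IsBasic Φ K → ∀ x : Fin N → ℝ,
      (∑ i, (ρ K x) i • Φ i = 0) ∧
      x - ρ K x ∈ Submodule.span ℝ ((fun i => (Pi.single i 1 : Fin N → ℝ)) '' ↑K))
variable {K : Finset (Fin N)} (hK : IsBasic Φ K)
include hρ hK

lemma rho_fix {v : Fin N → ℝ} (hv : ∑ i, v i • Φ i = 0) : ρ K v = v := by
  have h1 := (hρ K hK v).2
  have h2 := (hρ K hK v).1
  have h3 : ∀ l, l ∉ K → (v - ρ K v) l = 0 :=
    fun l hl => coord_zero_of_mem_span_single h1 hl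
  have h4 : ∑ i, (v - ρ K v) i • Φ i = 0 := by
    simp only [Pi.sub_apply, sub_smul, Finset.sum_sub_distrib, hv, h2, sub_zero]
  have h5 := hK.coeffs_eq_zero h3 h4
  have := sub_eq_zero.mp h5
  exact this.symm

lemma rho_single_mem {i : Fin N} (hi : i ∈ K) : ρ K (Pi.single i 1) = 0 := by
  have h1 := (hρ K hK (Pi.single i 1)).2
  have h2 := (hρ K hK (Pi.single i 1)).1
  have hmem : (Pi.single i 1 : Fin N → ℝ) ∈
      Submodule.span ℝ ((fun i => (Pi.single i 1 : Fin N → ℝ)) '' ↑K) :=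
    Submodule.subset_span ⟨i, hi, rfl⟩
  have hmem2 : ρ K (Pi.single i 1) ∈
      Submodule.span ℝ ((fun i => (Pi.single i 1 : Fin N → ℝ)) '' ↑K) := by
    have := Submodule.sub_mem _ hmem h1
    simpa using this
  exact hK.coeffs_eq_zero (fun l hl => coord_zero_of_mem_span_single hmem2 hl) h2

lemma rho_single_self {j : Fin N} (hj : j ∉ K) : (ρ K (Pi.single j 1)) j = 1 := by
  have h1 := (hρ K hK (Pi.single j 1)).2
  have h2 := coord_zero_of_mem_span_single h1 hj
  simp only [Pi.sub_apply, Pi.single_eq_same] at h2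
  linarith

lemma rho_single_supp {j l : Fin N} (hlK : l ∉ K) (hlj : l ≠ j) :
    (ρ K (Pi.single j 1)) l = 0 := by
  have h1 := (hρ K hK (Pi.single j 1)).2
  have h2 := coord_zero_of_mem_span_single h1 hlK
  simp only [Pi.sub_apply] at h2
  rw [Pi.single_eq_of_ne hlj] at h2
  linarith

lemma beta_on_ker (β : (Fin N → ℝ) →ₗ[ℝ] ℝ) {v : Fin N → ℝ}
    (hv : ∑ i, v i • Φ i = 0) :
    β v = ∑ l ∈ Kᶜ, v l * β (ρ K (Pi.single l 1)) := by
  have hfix : ρ K v = v := rho_fix ρ hρ hK hv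
  have hv2 : v = ∑ l, v l • (Pi.single l 1 : Fin N → ℝ) := (sum_single_smul v).symm
  have step : β v = ∑ l, v l * β (ρ K (Pi.single l 1)) := by
    conv_lhs => rw [← hfix, hv2]
    simp [map_sum, map_smul, smul_eq_mul]
  rw [step]
  symm
  apply Finset.sum_subset (Finset.subset_univ _)
  intro i _ hi
  have hiK : i ∈ K := by simpa using hi
  rw [rho_single_mem ρ hρ hK hiK, map_zero, mul_zero]

end Rho

set_option maxHeartbeats 1000000 in
/-- The tope of a regular point in the strictly positive cone over a basic set `K`
is contained in the cone over `K`. -/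
lemma tope_subset_cone (hgen : Submodule.span ℝ (Set.range Φ) = ⊤)
    {K : Finset (Fin N)} (hK : IsBasic Φ K) {μ : F} (hreg : IsRegular Φ μ)
    {x : Fin N → ℝ} (hx : ∀ i ∈ K, 0 < x i) (hxs : ∀ i, i ∉ K → x i = 0)
    (hμ : ∑ i, x i • Φ i = μ) :
    connectedComponentIn {y | IsRegular Φ y} μ ⊆ coneOf Φ ↑K := by
  classical
  have hr : Set.range (fun i : {x // x ∈ K} => Φ i.1) = Φ '' ↑K := by
    ext v; simp [Set.mem_image, Set.mem_range, Subtype.exists]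
  set b : Module.Basis {x // x ∈ K} ℝ F := Module.Basis.mk hK.1 (by rw [hr, hK.2]) with hbdef
  have hb : ∀ i : {x // x ∈ K}, b i = Φ i.1 := fun i => Module.Basis.mk_apply _ _ i
  have hcont : ∀ i : {x // x ∈ K}, Continuous fun v => b.coord i v :=
    fun i => (b.coord i).continuous_of_finiteDimensional
  set U : Set F := {v | ∀ i : {x // x ∈ K}, 0 < b.coord i v} with hU
  set B : Set F := {v | ∃ i : {x // x ∈ K}, b.coord i v < 0} with hB
  have hUopen : IsOpen U := by
    have h1 : U = ⋂ i : {x // x ∈ K}, {v | 0 < b.coord i v} := by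
      ext v; simp [hU, Set.mem_iInter]
    rw [h1]
    exact isOpen_iInter_of_finite fun i => isOpen_lt continuous_const (hcont i)
  have hBopen : IsOpen B := by
    have h1 : B = ⋃ i : {x // x ∈ K}, {v | b.coord i v < 0} := by
      ext v; simp [hB]
    rw [h1]
    exact isOpen_iUnion fun i => isOpen_lt (hcont i) continuous_const
  have hdisj : Disjoint U B := by
    rw [Set.disjoint_left]
    rintro v hv ⟨i, hi⟩
    exact absurd (hv i) (not_lt.mpr hi.le)
  -- any regular point has all coordinates positive or some negative
  have hcover : connectedComponentIn {y | IsRegular Φ y} μ ⊆ U ∪ B := by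
    intro v hv
    have hvreg : IsRegular Φ v := connectedComponentIn_subset _ _ hv
    by_cases hneg : ∃ i : {x // x ∈ K}, b.coord i v < 0
    · exact Or.inr hneg
    push_neg at hneg
    left
    intro i
    rcases lt_or_eq_of_le (hneg i) with h | h
    · exact h
    exfalso
    -- coordinate vanishes : v lies on a wall
    have hzero : b.repr v i = 0 := by
      rw [← Module.Basis.coord_apply, ← h]
    have hvmem : v ∈ Submodule.span ℝ (Φ '' ↑(K.erase i.1)) := by
      rw [← b.sum_repr v]
      apply Submodule.sum_mem
      intro j _
      by_cases hji : j = i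
      · rw [hji, hzero, zero_smul]; exact Submodule.zero_mem _
      · apply Submodule.smul_mem
        apply Submodule.subset_span
        refine ⟨j.1, ?_, (hb j).symm⟩
        rw [Finset.coe_erase]
        exact ⟨j.2, fun h2 => hji (Subtype.ext h2)⟩
    have hind : LinearIndependent ℝ (fun l : {x // x ∈ K.erase i.1} => Φ l.1) :=
      hK.1.comp (fun l => ⟨l.1, Finset.mem_of_mem_erase l.2⟩)
        (fun l m hlm => Subtype.ext (by simpa using congrArg Subtype.val hlm))
    have hcard : (K.erase i.1).card < Module.finrank ℝ F := by
      rw [← hK.card_eq]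
      exact Finset.card_erase_lt_of_mem i.2
    exact not_regular_of_small hgen hind hcard hvmem hvreg
  have hμU : μ ∈ U := by
    have hμeq : μ = ∑ j : {x // x ∈ K}, x j.1 • b j := by
      rw [← hμ]
      rw [show (∑ i, x i • Φ i) = ∑ i ∈ K, x i • Φ i from
        (Finset.sum_subset (Finset.subset_univ K)
          (fun i _ hi => by rw [hxs i hi, zero_smul])).symm]
      rw [← Finset.sum_coe_sort K (fun i => x i • Φ i)]
      exact Finset.sum_congr rfl fun j _ => by rw [hb j]
    intro i
    have hrepr : b.repr μ i = x i.1 := by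
      rw [hμeq]
      exact congrFun (b.repr_sum_self fun j => x j.1) i
    rw [Module.Basis.coord_apply, hrepr]
    exact hx i.1 i.2
  have hccU : connectedComponentIn {y | IsRegular Φ y} μ ⊆ U := by
    apply IsPreconnected.subset_left_of_subset_union hUopen hBopen hdisj hcover
      ⟨μ, mem_connectedComponentIn hreg, hμU⟩
    exact (isPreconnected_connectedComponentIn)
  intro v hv
  have hvU : v ∈ U := hccU hv
  refine ⟨fun i => if h : i ∈ K then b.repr v ⟨i, h⟩ else 0, ?_, ?_, ?_⟩
  · intro i
    show (0:ℝ) ≤ if h : i ∈ K then b.repr v ⟨i, h⟩ else 0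
    by_cases h : i ∈ K
    · rw [dif_pos h]
      have := hvU ⟨i, h⟩
      rw [Module.Basis.coord_apply] at this
      exact this.le
    · rw [dif_neg h]
  · intro i hi
    show (if h : i ∈ K then b.repr v ⟨i, h⟩ else 0) = 0
    rw [dif_neg (fun h => hi (Finset.mem_coe.mpr h))]
  · show v = ∑ i, (if h : i ∈ K then b.repr v ⟨i, h⟩ else 0) • Φ i
    rw [show (∑ i, (if h : i ∈ K then b.repr v ⟨i, h⟩ else 0) • Φ i)
        = ∑ i ∈ K, (if h : i ∈ K then b.repr v ⟨i, h⟩ else 0) • Φ i from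
      (Finset.sum_subset (Finset.subset_univ K)
        (fun i _ hi => by rw [dif_neg hi, zero_smul])).symm]
    rw [← Finset.sum_coe_sort K
      (fun i => (if h : i ∈ K then b.repr v ⟨i, h⟩ else 0) • Φ i)]
    rw [show (∑ j : {x // x ∈ K}, (if h : j.1 ∈ K then b.repr v ⟨j.1, h⟩ else 0) • Φ j.1)
        = ∑ j : {x // x ∈ K}, b.repr v j • b j from
      Finset.sum_congr rfl fun j _ => by rw [dif_pos j.2, hb j]]
    exact (b.sum_repr v).symm

section Main

variable (ρ : Finset (Fin N) → (Fin N → ℝ) →ₗ[ℝ] (Fin N → ℝ))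
variable (β : (Fin N → ℝ) →ₗ[ℝ] ℝ)

/-- Existence of an optimal basis. -/
lemma exists_opt_basis (hgen : Submodule.span ℝ (Set.range Φ) = ⊤)
    {a : F →ₗ[ℝ] ℝ} (ha : ∀ i, 0 < a (Φ i))
    (hρ : ∀ K : Finset (Fin N), IsBasic Φ K → ∀ x : Fin N → ℝ,
      (∑ i, (ρ K x) i • Φ i = 0) ∧
      x - ρ K x ∈ Submodule.span ℝ ((fun i => (Pi.single i 1 : Fin N → ℝ)) '' ↑K))
    (hβ : ∀ K : Finset (Fin N), IsBasic Φ K →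
      ∀ j ∉ K, β (ρ K (Pi.single j 1)) ≠ 0)
    {μ : F} (hreg : IsRegular Φ μ) {I : Finset (Fin N)}
    (hμI : μ ∈ coneOf Φ (↑I : Set (Fin N))) :
    ∃ K : Finset (Fin N), IsBasic Φ K ∧ K ⊆ I ∧
      (∃ x : Fin N → ℝ, (∀ i ∈ K, 0 < x i) ∧ (∀ i, i ∉ K → x i = 0) ∧
        ∑ i, x i • Φ i = μ) ∧
      ∀ j ∈ I, j ∉ K → β (ρ K (Pi.single j 1)) < 0 := by
  classical
  set P : Set (Fin N → ℝ) :=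
    {x | (∀ i, 0 ≤ x i) ∧ (∀ i, i ∉ I → x i = 0) ∧ ∑ i, x i • Φ i = μ} with hP
  have hPne : P.Nonempty := by
    obtain ⟨c, h1, h2, h3⟩ := hμI
    exact ⟨c, h1, fun i hi => h2 i (by simpa using hi), h3.symm⟩
  have hMcont : Continuous fun x : Fin N → ℝ => ∑ i, x i • Φ i := by
    apply continuous_finset_sum
    intro i _
    exact (continuous_apply i).smul continuous_const
  have hPclosed : IsClosed P := by
    have h1 : IsClosed {x : Fin N → ℝ | ∀ i, 0 ≤ x i} := by
      have he : {x : Fin N → ℝ | ∀ i, 0 ≤ x i} = ⋂ i, {x | 0 ≤ x i} := by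
        ext x; simp [Set.mem_iInter]
      rw [he]
      exact isClosed_iInter fun i => isClosed_le continuous_const (continuous_apply i)
    have h2 : IsClosed {x : Fin N → ℝ | ∀ i, i ∉ I → x i = 0} := by
      have he : {x : Fin N → ℝ | ∀ i, i ∉ I → x i = 0}
          = ⋂ i ∈ {j : Fin N | j ∉ I}, {x | x i = 0} := by
        ext x; simp [Set.mem_iInter]
      rw [he]
      exact isClosed_biInter fun i _ => isClosed_eq (continuous_apply i) continuous_const
    have h3 : IsClosed {x : Fin N → ℝ | ∑ i, x i • Φ i = μ} :=
      isClosed_eq hMcont continuous_const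
    have hPeq : P = {x : Fin N → ℝ | ∀ i, 0 ≤ x i}
        ∩ ({x | ∀ i, i ∉ I → x i = 0} ∩ {x | ∑ i, x i • Φ i = μ}) := by
      ext x
      simp only [hP, Set.mem_setOf_eq, Set.mem_inter_iff]
      try tauto
    rw [hPeq]
    exact h1.inter (h2.inter h3)
  have hbound : ∀ x ∈ P, ∀ i, x i ≤ a μ / a (Φ i) := by
    intro x hx i
    have hsum : ∑ j, x j * a (Φ j) = a μ := by
      have := congrArg a hx.2.2
      simpa [map_sum, map_smul, smul_eq_mul] using this
    have hle : x i * a (Φ i) ≤ a μ := by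
      rw [← hsum]
      exact Finset.single_le_sum (f := fun j => x j * a (Φ j))
        (fun j _ => mul_nonneg (hx.1 j) (ha j).le) (Finset.mem_univ i)
    exact (le_div_iff₀ (ha i)).mpr hle
  have hPcomp : IsCompact P := by
    apply IsCompact.of_isClosed_subset
      (isCompact_univ_pi fun i => isCompact_Icc (a := (0:ℝ)) (b := a μ / a (Φ i)))
      hPclosed
    intro x hx
    rw [Set.mem_univ_pi]
    intro i
    exact Set.mem_Icc.mpr ⟨hx.1 i, hbound x hx i⟩
  have hβcont : Continuous β := β.continuous_of_finiteDimensional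
  obtain ⟨x₀, hx₀P, hx₀max⟩ := hPcomp.exists_isMaxOn hPne hβcont.continuousOn
  set Q : ℕ → Prop := fun n => ∃ x, (x ∈ P ∧ IsMaxOn (⇑β) P x)
    ∧ (Finset.univ.filter fun i => x i ≠ 0).card = n with hQ
  have hQex : ∃ n, Q n := ⟨_, x₀, ⟨hx₀P, hx₀max⟩, rfl⟩
  obtain ⟨x', ⟨hx'P, hx'max⟩, hx'card⟩ := Nat.find_spec hQex
  set S : Finset (Fin N) := Finset.univ.filter fun i => x' i ≠ 0 with hS
  have hSmem : ∀ i, i ∈ S ↔ x' i ≠ 0 := by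
    intro i; rw [hS, Finset.mem_filter]; simp
  have hSzero : ∀ i, i ∉ S → x' i = 0 := by
    intro i hi; by_contra h; exact hi ((hSmem i).mpr h)
  have hSpos : ∀ i ∈ S, 0 < x' i :=
    fun i hi => lt_of_le_of_ne (hx'P.1 i) (Ne.symm ((hSmem i).mp hi))
  have hSI : S ⊆ I := by
    intro i hi
    by_contra h
    exact (hSmem i).mp hi (hx'P.2.1 i h)
  have hβdir : ∀ w : Fin N → ℝ, (∑ i, w i • Φ i = 0) → (∀ l, l ∉ S → 0 ≤ w l) →
      (∀ l, l ∉ I → w l = 0) → β w ≤ 0 := by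
    intro w hw0 hwS hwI
    obtain ⟨t₁, ht₁pos, ht₁le⟩ : ∃ t₁ : ℝ, 0 < t₁ ∧ ∀ i ∈ S, t₁ * |w i| ≤ x' i := by
      by_cases hSne : S.Nonempty
      · have hpos : 0 < S.inf' hSne (fun i => x' i / (|w i| + 1)) := by
          rw [Finset.lt_inf'_iff]
          intro i hi
          exact div_pos (hSpos i hi) (by positivity)
        refine ⟨_, hpos, fun i hi => ?_⟩
        have h1 := Finset.inf'_le (fun i => x' i / (|w i| + 1)) hi
        have h2 : (0:ℝ) ≤ |w i| := abs_nonneg _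
        have h3 : (x' i / (|w i| + 1)) * (|w i| + 1) = x' i :=
          div_mul_cancel₀ _ (by positivity)
        nlinarith
      · exact ⟨1, one_pos, fun i hi => absurd ⟨i, hi⟩ hSne⟩
    have hmem : (x' + t₁ • w) ∈ P := by
      refine ⟨?_, ?_, ?_⟩
      · intro i
        simp only [Pi.add_apply, Pi.smul_apply, smul_eq_mul]
        by_cases hi : i ∈ S
        · have h4 : |t₁ * w i| ≤ x' i := by
            rw [abs_mul, abs_of_pos ht₁pos]
            exact ht₁le i hi
          have h5 := (abs_le.mp h4).1
          linarith
        · exact add_nonneg (hx'P.1 i) (mul_nonneg ht₁pos.le (hwS i hi))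
      · intro i hi
        simp only [Pi.add_apply, Pi.smul_apply, smul_eq_mul]
        rw [hx'P.2.1 i hi, hwI i hi, mul_zero, add_zero]
      · have hMsum : ∑ i, (x' + t₁ • w) i • Φ i
            = (∑ i, x' i • Φ i) + t₁ • ∑ i, w i • Φ i := by
          rw [Finset.smul_sum, ← Finset.sum_add_distrib]
          apply Finset.sum_congr rfl
          intro i _
          simp only [Pi.add_apply, Pi.smul_apply, smul_eq_mul]
          rw [add_smul, mul_smul]
        rw [hMsum, hw0, smul_zero, add_zero]
        exact hx'P.2.2
    have h6 : β (x' + t₁ • w) ≤ β x' := hx'max hmem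
    have h7 : β (x' + t₁ • w) = β x' + t₁ * β w := by
      rw [map_add, map_smul, smul_eq_mul]
    rw [h7] at h6
    nlinarith
  have hSind : LinearIndependent ℝ (fun i : {x // x ∈ S} => Φ i.1) := by
    by_contra hdep
    obtain ⟨g, hg0, i₀, hgi₀⟩ := Fintype.not_linearIndependent_iff.mp hdep
    set y : Fin N → ℝ := fun i => if h : i ∈ S then g ⟨i, h⟩ else 0 with hy
    have hysupp : ∀ i, i ∉ S → y i = 0 := fun i hi => dif_neg hi
    have hymem : ∀ i : {x // x ∈ S}, y i.1 = g i := fun i => dif_pos i.2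
    have hysum : ∑ i, y i • Φ i = 0 := by
      rw [show (∑ i, y i • Φ i) = ∑ i ∈ S, y i • Φ i from
        (Finset.sum_subset (Finset.subset_univ S)
          (fun i _ hi => by rw [hysupp i hi, zero_smul])).symm]
      rw [← Finset.sum_coe_sort S (fun i => y i • Φ i)]
      rw [show (∑ i : {x // x ∈ S}, y i.1 • Φ i.1)
          = ∑ i : {x // x ∈ S}, g i • Φ i.1 from
        Finset.sum_congr rfl fun i _ => by rw [hymem i]]
      exact hg0
    have hnegsum : ∑ i, (-y) i • Φ i = 0 := by
      have : ∑ i, (-y) i • Φ i = -∑ i, y i • Φ i := by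
        rw [← Finset.sum_neg_distrib]
        exact Finset.sum_congr rfl fun i _ => by
          rw [Pi.neg_apply, neg_smul]
      rw [this, hysum, neg_zero]
    have hyI : ∀ l, l ∉ I → y l = 0 := fun l hl => hysupp l (fun h => hl (hSI h))
    have hβy : β y = 0 := by
      have h1 := hβdir y hysum (fun l hl => le_of_eq (hysupp l hl).symm) hyI
      have h2 := hβdir (-y) hnegsum
        (fun l hl => by rw [Pi.neg_apply, hysupp l hl, neg_zero])
        (fun l hl => by rw [Pi.neg_apply, hyI l hl, neg_zero])
      rw [map_neg] at h2
      linarith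
    have hTne : (S.filter fun i => 0 < y i).Nonempty := by
      by_contra hT
      have hT' : ∀ i ∈ S, ¬ 0 < y i := by
        intro i hi hpos
        exact hT ⟨i, Finset.mem_filter.mpr ⟨hi, hpos⟩⟩
      have hyneg : ∀ i, 0 ≤ (-y) i := by
        intro i
        rw [Pi.neg_apply]
        by_cases hi : i ∈ S
        · have := hT' i hi
          push_neg at this
          linarith
        · rw [hysupp i hi]
          simp
      have hzero := eq_zero_of_nonneg_comb ha hyneg hnegsum
      have hy0 : y i₀.1 = 0 := by
        have := congrFun hzero i₀.1
        simp only [Pi.neg_apply, Pi.zero_apply, neg_eq_zero] at this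
        exact this
      rw [hymem i₀] at hy0
      exact hgi₀ hy0
    obtain ⟨m, hmT, hmmin⟩ := Finset.exists_min_image _ (fun i => x' i / y i) hTne
    have hmS : m ∈ S := (Finset.mem_filter.mp hmT).1
    have hym : 0 < y m := (Finset.mem_filter.mp hmT).2
    set t₂ : ℝ := x' m / y m with ht₂
    have ht₂pos : 0 < t₂ := div_pos (hSpos m hmS) hym
    set x'' : Fin N → ℝ := x' - t₂ • y with hx''
    have hx''P : x'' ∈ P := by
      refine ⟨?_, ?_, ?_⟩
      · intro i
        simp only [hx'', Pi.sub_apply, Pi.smul_apply, smul_eq_mul]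
        by_cases hyi : 0 < y i
        · have hiS : i ∈ S := by
            by_contra h
            rw [hysupp i h] at hyi
            exact lt_irrefl 0 hyi
          have hile := hmmin i (Finset.mem_filter.mpr ⟨hiS, hyi⟩)
          have := (le_div_iff₀ hyi).mp hile
          linarith
        · push_neg at hyi
          have h1 : t₂ * y i ≤ 0 := mul_nonpos_iff.mpr (Or.inl ⟨ht₂pos.le, hyi⟩)
          linarith [hx'P.1 i]
      · intro i hi
        simp only [hx'', Pi.sub_apply, Pi.smul_apply, smul_eq_mul]
        rw [hx'P.2.1 i hi, hyI i hi, mul_zero, sub_zero]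
      · have hsub : ∑ i, x'' i • Φ i = (∑ i, x' i • Φ i) - t₂ • ∑ i, y i • Φ i := by
          rw [Finset.smul_sum, ← Finset.sum_sub_distrib]
          apply Finset.sum_congr rfl
          intro i _
          simp only [hx'', Pi.sub_apply, Pi.smul_apply, smul_eq_mul]
          rw [sub_smul, mul_smul]
        rw [hsub, hysum, smul_zero, sub_zero]
        exact hx'P.2.2
    have hx''β : β x'' = β x' := by
      rw [hx'', map_sub, map_smul, hβy, smul_zero, sub_zero]
    have hx''max : IsMaxOn (⇑β) P x'' := by
      intro z hz
      show β z ≤ β x''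
      rw [hx''β]
      exact hx'max hz
    have hsub2 : (Finset.univ.filter fun i => x'' i ≠ 0) ⊆ S := by
      intro i hi
      rw [Finset.mem_filter] at hi
      by_contra hiS
      apply hi.2
      simp only [hx'', Pi.sub_apply, Pi.smul_apply, smul_eq_mul]
      rw [hSzero i hiS, hysupp i hiS, mul_zero, sub_zero]
    have hx''m : x'' m = 0 := by
      simp only [hx'', Pi.sub_apply, Pi.smul_apply, smul_eq_mul, ht₂]
      rw [div_mul_cancel₀ _ (ne_of_gt hym)]
      ring
    have hsupp'' : (Finset.univ.filter fun i => x'' i ≠ 0) ⊂ S := by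
      rw [Finset.ssubset_iff_of_subset hsub2]
      refine ⟨m, hmS, ?_⟩
      rw [Finset.mem_filter]
      push_neg
      intro _
      exact hx''m
    have hQ'' : Q ((Finset.univ.filter fun i => x'' i ≠ 0).card) :=
      ⟨x'', ⟨hx''P, hx''max⟩, rfl⟩
    have hlt : (Finset.univ.filter fun i => x'' i ≠ 0).card < Nat.find hQex := by
      rw [← hx'card]
      exact Finset.card_lt_card hsupp''
    exact Nat.find_min hQex hlt hQ''
  have hμspan : μ ∈ Submodule.span ℝ (Φ '' ↑S) := by
    rw [← hx'P.2.2]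
    rw [show (∑ i, x' i • Φ i) = ∑ i ∈ S, x' i • Φ i from
      (Finset.sum_subset (Finset.subset_univ S)
        (fun i _ hi => by rw [hSzero i hi, zero_smul])).symm]
    exact Submodule.sum_mem _ fun i hi =>
      Submodule.smul_mem _ _ (Submodule.subset_span ⟨i, hi, rfl⟩)
  have hcard_le : S.card ≤ Module.finrank ℝ F := by
    have := hSind.fintype_card_le_finrank
    simpa [Fintype.card_coe] using this
  have hScard : S.card = Module.finrank ℝ F := by
    rcases lt_or_eq_of_le hcard_le with h | h
    · exact absurd hreg (not_regular_of_small hgen hSind h hμspan)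
    · exact h
  have hSspan : Submodule.span ℝ (Φ '' ↑S) = ⊤ := by
    apply Submodule.eq_top_of_finrank_eq
    have hr2 : Set.range (fun i : {x // x ∈ S} => Φ i.1) = Φ '' ↑S := by
      ext v; simp [Set.mem_image, Set.mem_range, Subtype.exists]
    have h3 := finrank_span_eq_card hSind
    rw [hr2] at h3
    rw [h3, Fintype.card_coe, hScard]
  have hBasic : IsBasic Φ S := ⟨hSind, hSspan⟩
  refine ⟨S, hBasic, hSI, ⟨x', hSpos, hSzero, hx'P.2.2⟩, ?_⟩
  intro j hjI hjS
  have hw0 : ∑ i, (ρ S (Pi.single j 1)) i • Φ i = 0 := (hρ S hBasic _).1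
  have hwj : (ρ S (Pi.single j 1)) j = 1 := rho_single_self ρ hρ hBasic hjS
  have hws : ∀ l, l ∉ S → l ≠ j → (ρ S (Pi.single j 1)) l = 0 :=
    fun l hl hlj => rho_single_supp ρ hρ hBasic hl hlj
  have hβw : β (ρ S (Pi.single j 1)) ≤ 0 := by
    apply hβdir _ hw0
    · intro l hl
      by_cases hlj : l = j
      · subst hlj
        rw [hwj]
        norm_num
      · rw [hws l hl hlj]
    · intro l hl
      exact hws l (fun h => hl (hSI h)) (fun h => hl (h ▸ hjI))
  exact lt_of_le_of_ne hβw (hβ S hBasic j hjS)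

set_option maxHeartbeats 1000000 in
/-- Uniqueness of the optimal basis. -/
lemma opt_basis_unique (hgen : Submodule.span ℝ (Set.range Φ) = ⊤)
    (hρ : ∀ K : Finset (Fin N), IsBasic Φ K → ∀ x : Fin N → ℝ,
      (∑ i, (ρ K x) i • Φ i = 0) ∧
      x - ρ K x ∈ Submodule.span ℝ ((fun i => (Pi.single i 1 : Fin N → ℝ)) '' ↑K))
    {μ : F} (hreg : IsRegular Φ μ) {I K K' : Finset (Fin N)}
    (hK : IsBasic Φ K) (hK' : IsBasic Φ K') (hKI : K ⊆ I) (hK'I : K' ⊆ I)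
    (hμK : μ ∈ coneOf Φ (↑K : Set (Fin N))) (hμK' : μ ∈ coneOf Φ (↑K' : Set (Fin N)))
    (hneg : ∀ j ∈ I, j ∉ K → β (ρ K (Pi.single j 1)) < 0)
    (hneg' : ∀ j ∈ I, j ∉ K' → β (ρ K' (Pi.single j 1)) < 0) : K = K' := by
  classical
  obtain ⟨c, hc0, hcs, hcsum⟩ := hμK
  obtain ⟨c', hc'0, hc's, hc'sum⟩ := hμK'
  have hcK : ∀ l, l ∉ K → c l = 0 := fun l hl => hcs l (by simpa using hl)
  have hc'K : ∀ l, l ∉ K' → c' l = 0 := fun l hl => hc's l (by simpa using hl)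
  have hv : ∑ i, (c - c') i • Φ i = 0 := by
    have h1 : ∑ i, (c - c') i • Φ i = (∑ i, c i • Φ i) - ∑ i, c' i • Φ i := by
      rw [← Finset.sum_sub_distrib]
      exact Finset.sum_congr rfl fun i _ => by rw [Pi.sub_apply, sub_smul]
    rw [h1, ← hcsum, ← hc'sum, sub_self]
  have hv' : ∑ i, (c' - c) i • Φ i = 0 := by
    have h1 : ∑ i, (c' - c) i • Φ i = (∑ i, c' i • Φ i) - ∑ i, c i • Φ i := by
      rw [← Finset.sum_sub_distrib]
      exact Finset.sum_congr rfl fun i _ => by rw [Pi.sub_apply, sub_smul]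
    rw [h1, ← hcsum, ← hc'sum, sub_self]
  have hβv := beta_on_ker ρ hρ hK' β hv
  have hβv' := beta_on_ker ρ hρ hK β hv'
  -- each term in hβv is nonpositive
  have hterm : ∀ l ∈ K'ᶜ, (c - c') l * β (ρ K' (Pi.single l 1)) ≤ 0 := by
    intro l hl
    have hlK' : l ∉ K' := Finset.mem_compl.mp hl
    have hceq : (c - c') l = c l := by
      rw [Pi.sub_apply, hc'K l hlK', sub_zero]
    rw [hceq]
    by_cases hlI : l ∈ I
    · exact mul_nonpos_iff.mpr (Or.inl ⟨hc0 l, (hneg' l hlI hlK').le⟩)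
    · rw [hcK l (fun h => hlI (hKI h)), zero_mul]
  have hterm' : ∀ l ∈ Kᶜ, (c' - c) l * β (ρ K (Pi.single l 1)) ≤ 0 := by
    intro l hl
    have hlK : l ∉ K := Finset.mem_compl.mp hl
    have hceq : (c' - c) l = c' l := by
      rw [Pi.sub_apply, hcK l hlK, sub_zero]
    rw [hceq]
    by_cases hlI : l ∈ I
    · exact mul_nonpos_iff.mpr (Or.inl ⟨hc'0 l, (hneg l hlI hlK).le⟩)
    · rw [hc'K l (fun h => hlI (hK'I h)), zero_mul]
  have hβle : β (c - c') ≤ 0 := by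
    rw [hβv]
    exact Finset.sum_nonpos hterm
  have hβle' : β (c' - c) ≤ 0 := by
    rw [hβv']
    exact Finset.sum_nonpos hterm'
  have hβ0 : β (c - c') = 0 := by
    have : β (c' - c) = -β (c - c') := by
      rw [← neg_sub c c', map_neg]
    rw [this] at hβle'
    linarith
  -- every term vanishes
  have hall := (Finset.sum_eq_zero_iff_of_nonpos hterm).mp (by rw [← hβv, hβ0])
  have hcK' : ∀ l, l ∉ K' → c l = 0 := by
    intro l hlK'
    by_cases hlI : l ∈ I
    · have h1 := hall l (Finset.mem_compl.mpr hlK')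
      have hceq : (c - c') l = c l := by
        rw [Pi.sub_apply, hc'K l hlK', sub_zero]
      rw [hceq] at h1
      rcases mul_eq_zero.mp h1 with h | h
      · exact h
      · exact absurd h (ne_of_lt (hneg' l hlI hlK'))
    · exact hcK l (fun h => hlI (hKI h))
  have hμmem : μ ∈ Submodule.span ℝ (Φ '' ↑(K ∩ K')) := by
    rw [hcsum]
    rw [show (∑ i, c i • Φ i) = ∑ i ∈ K ∩ K', c i • Φ i from
      (Finset.sum_subset (Finset.subset_univ _) (fun i _ hi => by
        rw [Finset.mem_inter] at hi
        push_neg at hi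
        by_cases h : i ∈ K
        · rw [hcK' i (hi h), zero_smul]
        · rw [hcK i h, zero_smul])).symm]
    exact Submodule.sum_mem _ fun i hi =>
      Submodule.smul_mem _ _ (Submodule.subset_span ⟨i, hi, rfl⟩)
  by_contra hKK'
  have hsub : K ∩ K' ⊆ K := Finset.inter_subset_left
  have hne : K ∩ K' ≠ K := by
    intro h
    have hKsub : K ⊆ K' := fun i hi => (Finset.mem_inter.mp (h ▸ hi)).2
    exact hKK' (Finset.eq_of_subset_of_card_le hKsub
      (by rw [hK.card_eq, hK'.card_eq]))
  have hlt : (K ∩ K').card < Module.finrank ℝ F := by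
    rw [← hK.card_eq]
    exact Finset.card_lt_card (ssubset_of_subset_of_ne hsub hne)
  have hind : LinearIndependent ℝ (fun i : {x // x ∈ K ∩ K'} => Φ i.1) :=
    hK.1.comp (fun i => ⟨i.1, (Finset.mem_inter.mp i.2).1⟩)
      (fun l m hlm => Subtype.ext (by simpa using congrArg Subtype.val hlm))
  exact not_regular_of_small hgen hind hlt hμmem hreg

/-- The key counting identity. -/
lemma key_count (hgen : Submodule.span ℝ (Set.range Φ) = ⊤)
    (hsal : ∃ a : F →ₗ[ℝ] ℝ, ∀ i, 0 < a (Φ i))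
    {τ : Set F} (hτ : IsTope Φ τ)
    (hρ : ∀ K : Finset (Fin N), IsBasic Φ K → ∀ x : Fin N → ℝ,
      (∑ i, (ρ K x) i • Φ i = 0) ∧
      x - ρ K x ∈ Submodule.span ℝ ((fun i => (Pi.single i 1 : Fin N → ℝ)) '' ↑K))
    (hβ : ∀ K : Finset (Fin N), IsBasic Φ K →
      ∀ j ∉ K, β (ρ K (Pi.single j 1)) ≠ 0)
    (I : Finset (Fin N)) :
    (Finset.univ.filter fun K : Finset (Fin N) => K ∈ Bases Φ τ ∧ K ⊆ I ∧
        I \ K ⊆ Kᶜ.filter (fun j => β (ρ K (Pi.single j 1)) < 0)).card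
      = if I ∈ Gens Φ τ then 1 else 0 := by
  classical
  obtain ⟨μ, hμreg, hτeq⟩ := hτ
  obtain ⟨a, ha⟩ := hsal
  have hμτ : μ ∈ τ := by
    rw [hτeq]
    exact mem_connectedComponentIn hμreg
  by_cases hI : I ∈ Gens Φ τ
  · rw [if_pos hI]
    have hμI : μ ∈ coneOf Φ (↑I : Set (Fin N)) := hI.2 hμτ
    obtain ⟨K₀, hK₀b, hK₀I, ⟨x, hxpos, hxsupp, hxsum⟩, hK₀neg⟩ :=
      exists_opt_basis ρ β hgen ha hρ hβ hμreg hμI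
    have hK₀τ : τ ⊆ coneOf Φ ↑K₀ := by
      rw [hτeq]
      exact tope_subset_cone hgen hK₀b hμreg hxpos hxsupp hxsum
    rw [Finset.card_eq_one]
    refine ⟨K₀, ?_⟩
    ext K
    simp only [Finset.mem_filter, Finset.mem_univ, true_and, Finset.mem_singleton]
    constructor
    · rintro ⟨hKb, hKI, hKneg⟩
      have hμK : μ ∈ coneOf Φ (↑K : Set (Fin N)) := hKb.2 hμτ
      have hμK₀ : μ ∈ coneOf Φ (↑K₀ : Set (Fin N)) := hK₀τ hμτ
      exact opt_basis_unique ρ β hgen hρ hμreg hKb.1 hK₀b hKI hK₀I hμK hμK₀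
        (fun j hjI hjK => (Finset.mem_filter.mp
          (hKneg (Finset.mem_sdiff.mpr ⟨hjI, hjK⟩))).2)
        hK₀neg
    · rintro rfl
      refine ⟨⟨hK₀b, hK₀τ⟩, hK₀I, ?_⟩
      intro j hj
      rw [Finset.mem_sdiff] at hj
      rw [Finset.mem_filter, Finset.mem_compl]
      exact ⟨hj.2, hK₀neg j hj.1 hj.2⟩
  · rw [if_neg hI, Finset.card_eq_zero, Finset.filter_eq_empty_iff]
    rintro K -
    rintro ⟨⟨hKbasic, hKτ⟩, hKI, -⟩
    apply hI
    constructor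
    · exact top_unique (by
        rw [← hKbasic.2]
        exact Submodule.span_mono (Set.image_mono (Finset.coe_subset.mpr hKI)))
    · exact hKτ.trans (coneOf_mono hKI)

lemma sum_powerset_union {M : Type*} [AddCommMonoid M] (K s : Finset (Fin N))
    (hdisj : ∀ x ∈ s, x ∉ K) (f : Finset (Fin N) → M) :
    ∑ J ∈ s.powerset, f (K ∪ J) =
      ∑ I : Finset (Fin N), if K ⊆ I ∧ I \ K ⊆ s then f I else 0 := by
  classical
  rw [← Finset.sum_filter]
  refine Finset.sum_bij' (fun J _ => K ∪ J) (fun I _ => I \ K) ?_ ?_ ?_ ?_ ?_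
  · intro J hJ
    rw [Finset.mem_powerset] at hJ
    simp only [Finset.mem_filter, Finset.mem_univ, true_and]
    refine ⟨Finset.subset_union_left, ?_⟩
    intro x hx
    rw [Finset.mem_sdiff] at hx
    rcases Finset.mem_union.mp hx.1 with h | h
    · exact absurd h hx.2
    · exact hJ h
  · intro I hI
    rw [Finset.mem_filter] at hI
    rw [Finset.mem_powerset]
    exact hI.2.2
  · intro J hJ
    rw [Finset.mem_powerset] at hJ
    ext x
    rw [Finset.mem_sdiff, Finset.mem_union]
    constructor
    · rintro ⟨h | h, hK⟩
      · exact absurd h hK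
      · exact h
    · intro h
      exact ⟨Or.inr h, hdisj x (hJ h)⟩
  · intro I hI
    rw [Finset.mem_filter] at hI
    exact Finset.union_sdiff_of_subset hI.2.1
  · intro J hJ
    rfl

lemma lv_term_eq
    (hβ : ∀ K : Finset (Fin N), IsBasic Φ K →
      ∀ j ∉ K, β (ρ K (Pi.single j 1)) ≠ 0)
    {K : Finset (Fin N)} (hK : IsBasic Φ K) :
    (-1 : MvPolynomial (Fin N ⊕ Fin N) ℤ) ^
        ((Kᶜ.filter (fun j => β (ρ K (Pi.single j 1)) < 0)).card) *
      ((∏ i ∈ Kᶜ.filter (fun j => 0 < β (ρ K (Pi.single j 1))), X (Sum.inl i)) *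
        (∏ i ∈ Kᶜ.filter (fun j => β (ρ K (Pi.single j 1)) < 0), X (Sum.inr i)) *
        ∏ i ∈ K, (X (Sum.inl i) + X (Sum.inr i)))
    = ∑ J ∈ (Kᶜ.filter (fun j => β (ρ K (Pi.single j 1)) < 0)).powerset,
        ((-1 : MvPolynomial (Fin N ⊕ Fin N) ℤ) ^ ((K ∪ J).card - Module.finrank ℝ F) *
          ((∏ j ∈ (K ∪ J)ᶜ, X (Sum.inl j)) *
            ∏ i ∈ K ∪ J, (X (Sum.inl i) + X (Sum.inr i)))) := by
  classical
  set s := Kᶜ.filter (fun j => β (ρ K (Pi.single j 1)) < 0) with hs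
  set p := Kᶜ.filter (fun j => 0 < β (ρ K (Pi.single j 1))) with hp
  have hcompl : Kᶜ = p ∪ s := by
    ext j
    simp only [hp, hs, Finset.mem_union, Finset.mem_filter]
    constructor
    · intro hj
      rcases lt_trichotomy (β (ρ K (Pi.single j 1))) 0 with h | h | h
      · exact Or.inr ⟨hj, h⟩
      · exact absurd h (hβ K hK j (Finset.mem_compl.mp hj))
      · exact Or.inl ⟨hj, h⟩
    · rintro (⟨hj, _⟩ | ⟨hj, _⟩) <;> exact hj
  have hdisjps : Disjoint p s := by
    rw [Finset.disjoint_left]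
    intro j h1 h2
    rw [hp, Finset.mem_filter] at h1
    rw [hs, Finset.mem_filter] at h2
    linarith [h1.2, h2.2]
  have hsummand : ∀ J ∈ s.powerset,
      ((-1 : MvPolynomial (Fin N ⊕ Fin N) ℤ) ^ ((K ∪ J).card - Module.finrank ℝ F) *
        ((∏ j ∈ (K ∪ J)ᶜ, X (Sum.inl j)) *
          ∏ i ∈ K ∪ J, (X (Sum.inl i) + X (Sum.inr i))))
      = ((∏ i ∈ p, X (Sum.inl i)) * ∏ i ∈ K, (X (Sum.inl i) + X (Sum.inr i))) *
          ((∏ i ∈ J, (-(X (Sum.inl i) + X (Sum.inr i)))) *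
            ∏ i ∈ s \ J, X (Sum.inl i)) := by
    intro J hJ
    rw [Finset.mem_powerset] at hJ
    have hJK : Disjoint K J := by
      rw [Finset.disjoint_left]
      intro x hx hxJ
      have := hJ hxJ
      rw [hs, Finset.mem_filter, Finset.mem_compl] at this
      exact this.1 hx
    have hcard : (K ∪ J).card - Module.finrank ℝ F = J.card := by
      rw [Finset.card_union_of_disjoint hJK, hK.card_eq]
      omega
    have hcomplKJ : (K ∪ J)ᶜ = p ∪ (s \ J) := by
      ext x
      have hx := Finset.ext_iff.mp hcompl x
      simp only [Finset.mem_compl, Finset.mem_union] at hx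
      have h4 : x ∈ J → x ∈ s := fun h => hJ h
      have h5 : x ∈ p → x ∉ s := fun h h' => (Finset.disjoint_left.mp hdisjps) h h'
      simp only [Finset.mem_compl, Finset.mem_union, Finset.mem_sdiff]
      tauto
    have hdisj2 : Disjoint p (s \ J) := hdisjps.mono_right (Finset.sdiff_subset)
    rw [hcard, hcomplKJ, Finset.prod_union hdisj2, Finset.prod_union hJK]
    have hneg : ∏ i ∈ J, (-(X (Sum.inl i) + X (Sum.inr i))
          : MvPolynomial (Fin N ⊕ Fin N) ℤ)
        = (-1) ^ J.card * ∏ i ∈ J, (X (Sum.inl i) + X (Sum.inr i)) := by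
      calc ∏ i ∈ J, (-(X (Sum.inl i) + X (Sum.inr i)) : MvPolynomial (Fin N ⊕ Fin N) ℤ)
          = ∏ i ∈ J, ((-1) * (X (Sum.inl i) + X (Sum.inr i))) :=
            Finset.prod_congr rfl fun i _ => by ring
        _ = (∏ _i ∈ J, (-1 : MvPolynomial (Fin N ⊕ Fin N) ℤ)) *
              ∏ i ∈ J, (X (Sum.inl i) + X (Sum.inr i)) := Finset.prod_mul_distrib
        _ = (-1) ^ J.card * ∏ i ∈ J, (X (Sum.inl i) + X (Sum.inr i)) := by
            rw [Finset.prod_const]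
    rw [hneg]
    ring
  rw [Finset.sum_congr rfl hsummand, ← Finset.mul_sum, ← Finset.prod_add]
  have h2 : ∏ i ∈ s, ((-(X (Sum.inl i) + X (Sum.inr i))) + X (Sum.inl i)
        : MvPolynomial (Fin N ⊕ Fin N) ℤ)
      = (-1 : MvPolynomial (Fin N ⊕ Fin N) ℤ) ^ s.card * ∏ i ∈ s, X (Sum.inr i) := by
    calc ∏ i ∈ s, ((-(X (Sum.inl i) + X (Sum.inr i))) + X (Sum.inl i)
          : MvPolynomial (Fin N ⊕ Fin N) ℤ)
        = ∏ i ∈ s, ((-1) * X (Sum.inr i)) := Finset.prod_congr rfl fun i _ => by ring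
      _ = (∏ _i ∈ s, (-1 : MvPolynomial (Fin N ⊕ Fin N) ℤ)) * ∏ i ∈ s, X (Sum.inr i) :=
          Finset.prod_mul_distrib
      _ = (-1) ^ s.card * ∏ i ∈ s, X (Sum.inr i) := by rw [Finset.prod_const]
  rw [h2]
  ring

end Main

end AuxLemmas


/-- The combinatorial Lawrence-Varchenko function equals the combinatorial
Brianchon-Gram function: `Y(Φ,τ,β) = X(Φ,τ)`.  Here `ρ K` is the projection of
`ℝ^N` onto `V = ker(x ↦ ∑ x i • Φ i)` with kernel spanned by `{e i : i ∈ K}`,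
for each `Φ`-basic `K`, and `β` is a `Φ`-regular linear form. -/
theorem lawrence_varchenko_eq_brianchon_gram
    {F : Type*} [NormedAddCommGroup F] [NormedSpace ℝ F] [FiniteDimensional ℝ F]
    {N : ℕ} (Φ : Fin N → F)
    (hne : ∀ i, Φ i ≠ 0)
    (hgen : Submodule.span ℝ (Set.range Φ) = ⊤)
    (hsal : ∃ a : F →ₗ[ℝ] ℝ, ∀ i, 0 < a (Φ i))
    (τ : Set F) (hτ : IsTope Φ τ) (hτc : τ ⊆ fullCone Φ)
    (ρ : Finset (Fin N) → (Fin N → ℝ) →ₗ[ℝ] (Fin N → ℝ))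
    (hρ : ∀ K : Finset (Fin N), IsBasic Φ K → ∀ x : Fin N → ℝ,
      (∑ i, (ρ K x) i • Φ i = 0) ∧
      x - ρ K x ∈ Submodule.span ℝ ((fun i => (Pi.single i 1 : Fin N → ℝ)) '' ↑K))
    (β : (Fin N → ℝ) →ₗ[ℝ] ℝ)
    (hβ : ∀ K : Finset (Fin N), IsBasic Φ K →
      ∀ j ∉ K, β (ρ K (Pi.single j 1)) ≠ 0) :
    (∑ K : Finset (Fin N),
      if K ∈ Bases Φ τ then
        (-1 : MvPolynomial (Fin N ⊕ Fin N) ℤ) ^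
            ((Kᶜ.filter (fun j => β (ρ K (Pi.single j 1)) < 0)).card) *
          ((∏ i ∈ Kᶜ.filter (fun j => 0 < β (ρ K (Pi.single j 1))), X (Sum.inl i)) *
            (∏ i ∈ Kᶜ.filter (fun j => β (ρ K (Pi.single j 1)) < 0), X (Sum.inr i)) *
            ∏ i ∈ K, (X (Sum.inl i) + X (Sum.inr i)))
      else 0) = BGpoly Φ τ := by
  classical
  have key := key_count ρ β hgen hsal hτ hρ hβ
  trans (∑ K : Finset (Fin N), ∑ I : Finset (Fin N),
      if K ∈ Bases Φ τ ∧ K ⊆ I ∧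
          I \ K ⊆ Kᶜ.filter (fun j => β (ρ K (Pi.single j 1)) < 0) then
        (-1 : MvPolynomial (Fin N ⊕ Fin N) ℤ) ^ (I.card - Module.finrank ℝ F) *
          ((∏ j ∈ Iᶜ, X (Sum.inl j)) * ∏ i ∈ I, (X (Sum.inl i) + X (Sum.inr i)))
      else 0)
  · apply Finset.sum_congr rfl
    intro K _
    by_cases hK : K ∈ Bases Φ τ
    · rw [if_pos hK]
      refine (lv_term_eq ρ β hβ hK.1).trans ?_
      refine (sum_powerset_union K _
        (fun x hx => Finset.mem_compl.mp (Finset.mem_filter.mp hx).1)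
        (fun I => (-1 : MvPolynomial (Fin N ⊕ Fin N) ℤ) ^ (I.card - Module.finrank ℝ F) *
          ((∏ j ∈ Iᶜ, X (Sum.inl j)) *
            ∏ i ∈ I, (X (Sum.inl i) + X (Sum.inr i))))).trans ?_
      apply Finset.sum_congr rfl
      intro I _
      exact (if_congr (and_iff_right hK) rfl rfl).symm
    · rw [if_neg hK]
      symm
      apply Finset.sum_eq_zero
      intro I _
      rw [if_neg (fun h => hK h.1)]
  rw [Finset.sum_comm, BGpoly]
  apply Finset.sum_congr rfl
  intro I _
  rw [← Finset.sum_filter, Finset.sum_const, key I]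
  by_cases hI : I ∈ Gens Φ τ
  · rw [if_pos hI, if_pos hI, one_nsmul]
  · rw [if_neg hI, if_neg hI, zero_nsmul]

end AC
end
end

section
/- Let τ_1 and τ_2 be adjacent Φ-topes with τ_1 ⊆ c(Φ), with common wall H, and let K ∈ B(Φ,τ_1) with K ∉ B(Φ,τ_2). Then: (i) there is exactly one index k_1 ∈ K with φ_{k_1} ∉ H; this φ_{k_1} lies in the open side of H containing τ_1, and φ_k ∈ H for every other k ∈ K; (ii) if τ_{12} is the unique (Φ∩H)-tope such that closure(τ_1) ∩ closure(τ_2) ⊆ closure(τ_{12}), then τ_{12} is contained in the cone of nonnegative linear combinations of the vectors {φ_k : k ∈ K, k ≠ k_1}. -/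
open scoped Pointwise
open Classical MvPolynomial

noncomputable section

namespace AC

section Aux

/-- A continuous nonvanishing function on a preconnected set has constant sign. -/
theorem sign_const {X : Type*} [TopologicalSpace X] {f : X → ℝ} (hf : Continuous f)
    {s : Set X} (hs : IsPreconnected s) (h0 : ∀ x ∈ s, f x ≠ 0)
    {a b : X} (ha : a ∈ s) (hb : b ∈ s) (hfa : 0 < f a) : 0 < f b := by
  rcases lt_or_gt_of_ne (h0 b hb) with h | h
  · exfalso
    have h0mem : (0:ℝ) ∈ Set.Icc (f b) (f a) := ⟨le_of_lt h, le_of_lt hfa⟩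
    obtain ⟨x, hx, hfx⟩ := hs.intermediate_value hb ha hf.continuousOn h0mem
    exact h0 x hx hfx
  · exact h

variable {F : Type*} [AddCommGroup F] [Module ℝ F] {N : ℕ} {Φ : Fin N → F}
  {K : Finset (Fin N)}

theorem range_subtype_eq_image {α β : Type*} (f : α → β) (s : Finset α) :
    (Set.range fun i : {x // x ∈ s} => f i.1) = f '' ↑s := by
  ext v
  constructor
  · rintro ⟨i, rfl⟩
    exact ⟨i.1, i.2, rfl⟩
  · rintro ⟨j, hj, rfl⟩
    exact ⟨⟨j, Finset.mem_coe.mp hj⟩, rfl⟩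

theorem mem_coneOf_of_coords (b : Module.Basis {x // x ∈ K} ℝ F)
    (hb : ∀ k : {x // x ∈ K}, b k = Φ k.1)
    (J : Finset (Fin N)) (v : F)
    (hnn : ∀ k : {x // x ∈ K}, 0 ≤ b.repr v k)
    (hz : ∀ k : {x // x ∈ K}, k.1 ∉ J → b.repr v k = 0) :
    v ∈ coneOf Φ (↑J : Set (Fin N)) := by
  classical
  refine ⟨fun i => if h : i ∈ K then b.repr v ⟨i, h⟩ else 0, ?_, ?_, ?_⟩
  · intro i
    by_cases h : i ∈ K
    · simpa [h] using hnn ⟨i, h⟩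
    · simp [h]
  · intro i hiJ
    by_cases h : i ∈ K
    · simpa [h] using hz ⟨i, h⟩ hiJ
    · simp [h]
  · have h1 : ∑ i, (if h : i ∈ K then b.repr v ⟨i, h⟩ else 0) • Φ i
        = ∑ i ∈ K, (if h : i ∈ K then b.repr v ⟨i, h⟩ else 0) • Φ i := by
      refine (Finset.sum_subset (Finset.subset_univ K) ?_).symm
      intro i _ hiK
      simp [hiK]
    have h2 : ∑ i ∈ K, (if h : i ∈ K then b.repr v ⟨i, h⟩ else 0) • Φ i
        = ∑ k : {x // x ∈ K}, b.repr v k • b k := by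
      rw [← Finset.sum_coe_sort K (fun i => (if h : i ∈ K then b.repr v ⟨i, h⟩ else 0) • Φ i)]
      refine Finset.sum_congr rfl ?_
      intro k _
      rw [hb k, dif_pos k.2]
    rw [h1, h2, Module.Basis.sum_repr]

theorem coords_nonneg_of_mem_coneOf (b : Module.Basis {x // x ∈ K} ℝ F)
    (hb : ∀ k : {x // x ∈ K}, b k = Φ k.1)
    {v : F} (hv : v ∈ coneOf Φ (↑K : Set (Fin N)))
    (k : {x // x ∈ K}) : 0 ≤ b.repr v k := by
  classical
  obtain ⟨c, hc0, hcz, hcv⟩ := hv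
  have hvs : v = ∑ j : {x // x ∈ K}, c j.1 • b j := by
    rw [hcv]
    have h1 : ∑ i, c i • Φ i = ∑ i ∈ K, c i • Φ i := by
      refine (Finset.sum_subset (Finset.subset_univ K) ?_).symm
      intro i _ hiK
      simp [hcz i (by simpa using hiK)]
    rw [h1, ← Finset.sum_coe_sort K (fun i => c i • Φ i)]
    refine Finset.sum_congr rfl fun j _ => by rw [hb j]
  have : b.repr v k = c k.1 := by
    rw [hvs, Module.Basis.repr_sum_self]
  rw [this]
  exact hc0 k.1

end Aux

set_option maxHeartbeats 1000000 in
/-- Let `τ₁, τ₂` be adjacent topes with wall `H`, `τ₁ ⊆ c(Φ)`, and let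
`K ∈ B(Φ,τ₁) \ B(Φ,τ₂)`.  Then (i) exactly one `k₁ ∈ K` has `Φ k₁ ∉ H`; it
lies in the open side of `H` containing `τ₁`, and all other members of `K`
lie in `H`; (ii) if `τ₁₂` is a `(Φ∩H)`-tope whose closure contains
`closure τ₁ ∩ closure τ₂`, then `τ₁₂` is contained in the cone generated by
`{Φ k : k ∈ K, k ≠ k₁}`. -/
theorem basic_subsets_adjacent_topes
    {F : Type*} [NormedAddCommGroup F] [NormedSpace ℝ F] [FiniteDimensional ℝ F]
    {N : ℕ} (Φ : Fin N → F)
    (hne : ∀ i, Φ i ≠ 0)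
    (hgen : Submodule.span ℝ (Set.range Φ) = ⊤)
    (hsal : ∃ a : F →ₗ[ℝ] ℝ, ∀ i, 0 < a (Φ i))
    (τ₁ τ₂ : Set F) (H : Submodule ℝ F) (hadj : Adjacent Φ τ₁ τ₂ H)
    (hτ₁c : τ₁ ⊆ fullCone Φ)
    (K : Finset (Fin N)) (hK₁ : K ∈ Bases Φ τ₁) (hK₂ : K ∉ Bases Φ τ₂) :
    (∃ k₁ ∈ K, Φ k₁ ∉ H ∧ InOpenSideOf H τ₁ (Φ k₁) ∧
      ∀ k ∈ K, k ≠ k₁ → Φ k ∈ H) ∧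
    (∀ τ₁₂ : Set ↥H,
      IsTope (fun i : {i : Fin N // Φ i ∈ H} => (⟨Φ i.1, i.2⟩ : ↥H)) τ₁₂ →
      closure τ₁ ∩ closure τ₂ ⊆ Subtype.val '' closure τ₁₂ →
      ∀ k₁ ∈ K, Φ k₁ ∉ H →
        Subtype.val '' τ₁₂ ⊆ coneOf Φ (↑(K.erase k₁) : Set (Fin N))) := by
  classical
  obtain ⟨⟨hliK, hspanK⟩, hτ₁K⟩ := hK₁
  obtain ⟨hT1, hT2, hne12, hWallH, hsubH, hspanH⟩ := hadj
  obtain ⟨μ₁, hμ₁reg, hτ₁def⟩ := hT1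
  obtain ⟨μ₂, hμ₂reg, hτ₂def⟩ := hT2
  set r := Module.finrank ℝ F with hr
  -- the basis indexed by K
  have hspanK' : ⊤ ≤ Submodule.span ℝ (Set.range fun i : {x // x ∈ K} => Φ i.1) := by
    rw [range_subtype_eq_image Φ K]; exact hspanK.ge
  obtain ⟨b, hbk⟩ : ∃ b : Module.Basis {x // x ∈ K} ℝ F, ∀ k : {x // x ∈ K}, b k = Φ k.1 :=
    ⟨Module.Basis.mk hliK hspanK', fun k => by rw [Module.Basis.coe_mk]⟩
  have hcardK : K.card = r := by
    rw [hr, Module.finrank_eq_card_basis b, Fintype.card_coe]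
  obtain ⟨S₀, hS₀card, hS₀li, hS₀span⟩ := hWallH
  have hfinH : Module.finrank ℝ ↥H = S₀.card := by
    rw [hS₀span, ← range_subtype_eq_image Φ S₀]
    simpa [Fintype.card_coe] using finrank_span_eq_card hS₀li
  -- delta relations
  have hLδ : ∀ k j : {x // x ∈ K}, b.coord k (Φ j.1) = if j = k then 1 else 0 := by
    intro k j
    rw [← hbk j, Module.Basis.coord_apply, Module.Basis.repr_self, Finsupp.single_apply]
  have hLself : ∀ k : {x // x ∈ K}, b.coord k (Φ k.1) = 1 := by
    intro k; rw [hLδ k k, if_pos rfl]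
  have hLc : ∀ k : {x // x ∈ K}, Continuous (b.coord k) :=
    fun k => (b.coord k).continuous_of_finiteDimensional
  -- kernels of coordinates are walls
  have hkerW : ∀ k : {x // x ∈ K},
      LinearMap.ker (b.coord k) = Submodule.span ℝ (Φ '' ↑(K.erase k.1)) ∧
      IsWall Φ (LinearMap.ker (b.coord k)) := by
    intro k
    have hle : Submodule.span ℝ (Φ '' ↑(K.erase k.1)) ≤ LinearMap.ker (b.coord k) := by
      rw [Submodule.span_le]
      rintro x ⟨j, hj, rfl⟩
      have hjE : j ∈ K.erase k.1 := Finset.mem_coe.mp hj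
      have hjK : j ∈ K := Finset.mem_of_mem_erase hjE
      have hjne : (⟨j, hjK⟩ : {x // x ∈ K}) ≠ k := by
        intro hcon
        have : j = k.1 := congrArg Subtype.val hcon
        exact (Finset.ne_of_mem_erase hjE) this
      have := hLδ k ⟨j, hjK⟩
      simp only [LinearMap.mem_ker, SetLike.mem_coe]
      rw [this, if_neg hjne]
    have hli' : LinearIndependent ℝ (fun i : {x // x ∈ K.erase k.1} => Φ i.1) := by
      have einj : Function.Injective
          (fun i : {x // x ∈ K.erase k.1} => (⟨i.1, Finset.mem_of_mem_erase i.2⟩ : {x // x ∈ K})) := by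
        intro a a' h
        have h2 := congrArg Subtype.val h
        exact Subtype.ext h2
      exact hliK.comp _ einj
    have hcard' : (K.erase k.1).card = S₀.card := by
      rw [Finset.card_erase_of_mem k.2]
      omega
    have hfr : Module.finrank ℝ ↥(Submodule.span ℝ (Φ '' ↑(K.erase k.1))) = S₀.card := by
      rw [← range_subtype_eq_image Φ (K.erase k.1)]
      rw [finrank_span_eq_card hli', Fintype.card_coe, hcard']
    have hsurj : Function.Surjective (b.coord k) := by
      intro y
      exact ⟨y • Φ k.1, by rw [map_smul, hLself k, smul_eq_mul, mul_one]⟩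
    have hfk : Module.finrank ℝ ↥(LinearMap.ker (b.coord k)) = S₀.card := by
      have h1 := LinearMap.finrank_range_add_finrank_ker (b.coord k)
      rw [LinearMap.range_eq_top.mpr hsurj] at h1
      rw [finrank_top, Module.finrank_self] at h1
      omega
    have heq : Submodule.span ℝ (Φ '' ↑(K.erase k.1)) = LinearMap.ker (b.coord k) :=
      Submodule.eq_of_le_of_finrank_eq hle (by rw [hfr, hfk])
    exact ⟨heq.symm, K.erase k.1, by rw [hcard']; omega, hli', heq.symm⟩
  -- regular points avoid the kernels
  have hreg_ne : ∀ x : F, IsRegular Φ x → ∀ k : {x // x ∈ K}, b.coord k x ≠ 0 := by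
    intro x hx k hcon
    exact hx _ (hkerW k).2 (by simpa [LinearMap.mem_ker] using hcon)
  have hτ₁reg : ∀ x ∈ τ₁, IsRegular Φ x := by
    intro x hx
    rw [hτ₁def] at hx
    exact connectedComponentIn_subset _ _ hx
  have hτ₂reg : ∀ x ∈ τ₂, IsRegular Φ x := by
    intro x hx
    rw [hτ₂def] at hx
    exact connectedComponentIn_subset _ _ hx
  have hτ₁conn : IsPreconnected τ₁ := by rw [hτ₁def]; exact isPreconnected_connectedComponentIn
  have hτ₂conn : IsPreconnected τ₂ := by rw [hτ₂def]; exact isPreconnected_connectedComponentIn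
  -- coordinates are positive on τ₁
  have hτ₁pos : ∀ x ∈ τ₁, ∀ k : {x // x ∈ K}, 0 < b.coord k x := by
    intro x hx k
    have h0 : 0 ≤ b.repr x k := coords_nonneg_of_mem_coneOf b hbk (hτ₁K hx) k
    have hne0 := hreg_ne x (hτ₁reg x hx) k
    rw [Module.Basis.coord_apply] at hne0 ⊢
    exact lt_of_le_of_ne h0 (Ne.symm hne0)
  -- some coordinate is negative on τ₂
  have hμ₂mem : μ₂ ∈ τ₂ := by rw [hτ₂def]; exact mem_connectedComponentIn hμ₂reg
  have hμ₁mem : μ₁ ∈ τ₁ := by rw [hτ₁def]; exact mem_connectedComponentIn hμ₁reg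
  have hex : ∃ k₁ : {x // x ∈ K}, b.coord k₁ μ₂ < 0 := by
    by_contra hcon
    push_neg at hcon
    apply hK₂
    refine ⟨⟨hliK, hspanK⟩, ?_⟩
    intro x hx
    refine mem_coneOf_of_coords b hbk K x ?_ ?_
    · intro k
      have hk2 : 0 < b.coord k μ₂ :=
        lt_of_le_of_ne (hcon k) (Ne.symm (hreg_ne μ₂ hμ₂reg k))
      have := sign_const (hLc k) hτ₂conn
        (fun y hy => hreg_ne y (hτ₂reg y hy) k) hμ₂mem hx hk2
      rw [Module.Basis.coord_apply] at this
      exact le_of_lt this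
    · intro k hk
      exact absurd k.2 hk
  obtain ⟨k₁, hk₁neg⟩ := hex
  -- coord k₁ is negative on all of τ₂
  have hτ₂neg : ∀ x ∈ τ₂, b.coord k₁ x < 0 := by
    intro x hx
    have := sign_const (continuous_neg.comp (hLc k₁)) hτ₂conn
      (fun y hy h => hreg_ne y (hτ₂reg y hy) k₁ (by simpa using neg_eq_zero.mp h))
      hμ₂mem hx (by simpa using hk₁neg)
    simpa using this
  -- closures
  have hclτ₁ : ∀ x ∈ closure τ₁, ∀ k : {x // x ∈ K}, 0 ≤ b.coord k x := by
    intro x hx k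
    have : closure τ₁ ⊆ {y | 0 ≤ b.coord k y} :=
      closure_minimal (fun y hy => le_of_lt (hτ₁pos y hy k))
        (isClosed_le continuous_const (hLc k))
    exact this hx
  have hclτ₂ : ∀ x ∈ closure τ₂, b.coord k₁ x ≤ 0 := by
    intro x hx
    have : closure τ₂ ⊆ {y | b.coord k₁ y ≤ 0} :=
      closure_minimal (fun y hy => le_of_lt (hτ₂neg y hy))
        (isClosed_le (hLc k₁) continuous_const)
    exact this hx
  -- H is the kernel of coord k₁
  have hHker : H = LinearMap.ker (b.coord k₁) := by
    have hle : H ≤ LinearMap.ker (b.coord k₁) := by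
      rw [← hspanH, Submodule.span_le]
      intro x hx
      have h1 := hclτ₁ x hx.1 k₁
      have h2 := hclτ₂ x hx.2
      simp only [SetLike.mem_coe, LinearMap.mem_ker]
      linarith
    refine Submodule.eq_of_le_of_finrank_eq hle ?_
    have hfk : Module.finrank ℝ ↥(LinearMap.ker (b.coord k₁)) = S₀.card := by
      rw [(hkerW k₁).1, ← range_subtype_eq_image Φ (K.erase k₁.1)]
      have hli' : LinearIndependent ℝ (fun i : {x // x ∈ K.erase k₁.1} => Φ i.1) := by
        have einj : Function.Injective
            (fun i : {x // x ∈ K.erase k₁.1} => (⟨i.1, Finset.mem_of_mem_erase i.2⟩ : {x // x ∈ K})) := by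
          intro a a' h
          have h2 := congrArg Subtype.val h
          exact Subtype.ext h2
        exact hliK.comp _ einj
      rw [finrank_span_eq_card hli', Fintype.card_coe, Finset.card_erase_of_mem k₁.2]
      omega
    rw [hfinH, hfk]
  have hΦk₁notH : Φ k₁.1 ∉ H := by
    rw [hHker]
    intro hcon
    rw [LinearMap.mem_ker, hLself k₁] at hcon
    norm_num at hcon
  have hothers : ∀ k ∈ K, k ≠ k₁.1 → Φ k ∈ H := by
    intro k hk hkne
    rw [hHker, LinearMap.mem_ker, hLδ k₁ ⟨k, hk⟩,
      if_neg (fun h => hkne (congrArg Subtype.val h))]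
  constructor
  · -- part (i)
    refine ⟨k₁.1, k₁.2, hΦk₁notH, ⟨b.coord k₁, ?_, ?_, ?_⟩, hothers⟩
    · intro h hh
      rw [hHker, LinearMap.mem_ker] at hh
      exact hh
    · intro x hx
      exact hτ₁pos x hx k₁
    · rw [hLself k₁]; norm_num
  · -- part (ii)
    intro τ₁₂ hT12 hclsub k₁' hk₁'K hk₁'H
    have hk₁'eq : k₁' = k₁.1 := by
      by_contra hcon
      exact hk₁'H (hothers k₁' hk₁'K hcon)
    subst hk₁'eq
    obtain ⟨μ₁₂, hμ₁₂reg, hτ₁₂def⟩ := hT12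
    have hτ₁₂reg : ∀ y ∈ τ₁₂, IsRegular (fun i : {i : Fin N // Φ i ∈ H} => (⟨Φ i.1, i.2⟩ : ↥H)) y := by
      intro y hy
      rw [hτ₁₂def] at hy
      exact connectedComponentIn_subset _ _ hy
    have hτ₁₂conn : IsPreconnected τ₁₂ := by
      rw [hτ₁₂def]; exact isPreconnected_connectedComponentIn
    have hμ₁₂mem : μ₁₂ ∈ τ₁₂ := by rw [hτ₁₂def]; exact mem_connectedComponentIn hμ₁₂reg
    -- for each k ≠ k₁ the restricted coordinate is positive on τ₁₂
    have hpos12 : ∀ k : {x // x ∈ K}, k ≠ k₁ → ∀ y ∈ τ₁₂, 0 < b.coord k y.1 := by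
      intro k hkne
      have hΦkH : Φ k.1 ∈ H := hothers k.1 k.2 (fun h => hkne (Subtype.ext h))
      set M : ↥H →ₗ[ℝ] ℝ := (b.coord k).comp H.subtype with hMdef
      have hMc : Continuous M := (hLc k).comp continuous_subtype_val
      -- ker M is a wall for the restricted sequence
      have hwallM : IsWall (fun i : {i : Fin N // Φ i ∈ H} => (⟨Φ i.1, i.2⟩ : ↥H)) (LinearMap.ker M) := by
        have hall : ∀ j ∈ (K.erase k₁.1).erase k.1, Φ j ∈ H := by
          intro j hj
          have hjK : j ∈ K := Finset.mem_of_mem_erase (Finset.mem_of_mem_erase hj)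
          have hjne : j ≠ k₁.1 := Finset.ne_of_mem_erase (Finset.mem_of_mem_erase hj)
          exact hothers j hjK hjne
        set S' : Finset {i : Fin N // Φ i ∈ H} :=
          Finset.subtype _ ((K.erase k₁.1).erase k.1) with hS'def
        have hS'mem : ∀ i : {i : Fin N // Φ i ∈ H}, i ∈ S' ↔ i.1 ∈ (K.erase k₁.1).erase k.1 := by
          intro i; rw [hS'def]; exact Finset.mem_subtype
        have hS'card : S'.card = ((K.erase k₁.1).erase k.1).card := by
          rw [hS'def, ← Finset.card_map, Finset.subtype_map, Finset.filter_true_of_mem hall]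
        have hcard2 : ((K.erase k₁.1).erase k.1).card = S₀.card - 1 := by
          have hkmem : k.1 ∈ K.erase k₁.1 :=
            Finset.mem_erase.mpr ⟨fun h => hkne (Subtype.ext h), k.2⟩
          rw [Finset.card_erase_of_mem hkmem, Finset.card_erase_of_mem k₁.2]
          omega
        have hS₀pos : 1 ≤ S₀.card := by
          have hkmem : k.1 ∈ K.erase k₁.1 :=
            Finset.mem_erase.mpr ⟨fun h => hkne (Subtype.ext h), k.2⟩
          have := Finset.card_erase_of_mem k₁.2
          have hpos : 0 < (K.erase k₁.1).card := Finset.card_pos.mpr ⟨k.1, hkmem⟩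
          omega
        -- independence
        have hS'li : LinearIndependent ℝ
            (fun i : {x // x ∈ S'} => (⟨Φ i.1.1, i.1.2⟩ : ↥H)) := by
          apply LinearIndependent.of_comp H.subtype
          have einj : Function.Injective
              (fun i : {x // x ∈ S'} =>
                (⟨i.1.1, Finset.mem_of_mem_erase (Finset.mem_of_mem_erase ((hS'mem i.1).mp i.2))⟩ : {x // x ∈ K})) := by
            intro a a' h
            have h2 := congrArg Subtype.val h
            exact Subtype.ext (Subtype.ext h2)
          exact hliK.comp _ einj
        -- span = ker M
        have hle : Submodule.span ℝ
            ((fun i : {i : Fin N // Φ i ∈ H} => (⟨Φ i.1, i.2⟩ : ↥H)) '' ↑S') ≤ LinearMap.ker M := by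
          rw [Submodule.span_le]
          rintro x ⟨j, hj, rfl⟩
          have hj' : j.1 ∈ (K.erase k₁.1).erase k.1 := (hS'mem j).mp (Finset.mem_coe.mp hj)
          have hjK : j.1 ∈ K := Finset.mem_of_mem_erase (Finset.mem_of_mem_erase hj')
          have hjne : (⟨j.1, hjK⟩ : {x // x ∈ K}) ≠ k := by
            intro hcon
            exact (Finset.ne_of_mem_erase hj') (congrArg Subtype.val hcon)
          simp only [SetLike.mem_coe, LinearMap.mem_ker, hMdef, LinearMap.comp_apply]
          have := hLδ k ⟨j.1, hjK⟩
          rw [Submodule.subtype_apply]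
          simpa [if_neg hjne] using this
        have hfrS' : Module.finrank ℝ
            ↥(Submodule.span ℝ ((fun i : {i : Fin N // Φ i ∈ H} => (⟨Φ i.1, i.2⟩ : ↥H)) '' ↑S'))
            = S₀.card - 1 := by
          rw [← range_subtype_eq_image (fun i : {i : Fin N // Φ i ∈ H} => (⟨Φ i.1, i.2⟩ : ↥H)) S',
            finrank_span_eq_card hS'li, Fintype.card_coe, hS'card, hcard2]
        have hMsurj : Function.Surjective M := by
          intro y
          refine ⟨y • ⟨Φ k.1, hΦkH⟩, ?_⟩
          rw [map_smul]
          have : M ⟨Φ k.1, hΦkH⟩ = 1 := by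
            rw [hMdef, LinearMap.comp_apply, Submodule.subtype_apply]
            exact hLself k
          rw [this, smul_eq_mul, mul_one]
        have hfkM : Module.finrank ℝ ↥(LinearMap.ker M) = S₀.card - 1 := by
          have h1 := LinearMap.finrank_range_add_finrank_ker M
          rw [LinearMap.range_eq_top.mpr hMsurj, finrank_top, Module.finrank_self, hfinH] at h1
          omega
        have heq : Submodule.span ℝ
            ((fun i : {i : Fin N // Φ i ∈ H} => (⟨Φ i.1, i.2⟩ : ↥H)) '' ↑S') = LinearMap.ker M :=
          Submodule.eq_of_le_of_finrank_eq hle (by rw [hfrS', hfkM])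
        refine ⟨S', ?_, hS'li, heq.symm⟩
        rw [hS'card, hcard2, hfinH]
        omega
      -- M is nonvanishing on τ₁₂
      have hMne : ∀ y ∈ τ₁₂, M y ≠ 0 := by
        intro y hy hcon
        exact hτ₁₂reg y hy _ hwallM (by simpa [LinearMap.mem_ker] using hcon)
      -- positivity at μ₁₂
      have hMpos : 0 < M μ₁₂ := by
        rcases lt_or_gt_of_ne (hMne μ₁₂ hμ₁₂mem) with hlt | hgt
        · exfalso
          have hneg : ∀ y ∈ τ₁₂, M y < 0 := by
            intro y hy
            have := sign_const (continuous_neg.comp hMc) hτ₁₂conn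
              (fun z hz h => hMne z hz (by simpa using neg_eq_zero.mp h))
              hμ₁₂mem hy (by simpa using hlt)
            simpa using this
          have hclneg : ∀ y ∈ closure τ₁₂, M y ≤ 0 := by
            intro y hy
            have : closure τ₁₂ ⊆ {z | M z ≤ 0} :=
              closure_minimal (fun z hz => le_of_lt (hneg z hz))
                (isClosed_le hMc continuous_const)
            exact this hy
          -- then coord k vanishes on closure τ₁ ∩ closure τ₂, hence on H
          have hHle : H ≤ LinearMap.ker (b.coord k) := by
            rw [← hspanH, Submodule.span_le]
            intro x hx
            obtain ⟨y, hy, hyx⟩ := hclsub hx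
            have h1 := hclτ₁ x hx.1 k
            have h2 : b.coord k x ≤ 0 := by
              rw [← hyx]
              exact hclneg y hy
            simp only [SetLike.mem_coe, LinearMap.mem_ker]
            linarith
          have := hHle hΦkH
          rw [LinearMap.mem_ker, hLself k] at this
          norm_num at this
        · exact hgt
      intro y hy
      have := sign_const hMc hτ₁₂conn hMne hμ₁₂mem hy hMpos
      simpa [hMdef] using this
    -- conclude
    rintro v ⟨y, hy, rfl⟩
    refine mem_coneOf_of_coords b hbk (K.erase k₁.1) y.1 ?_ ?_
    · intro k
      by_cases hk : k = k₁
      · subst hk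
        have : y.1 ∈ LinearMap.ker (b.coord k) := by rw [← hHker]; exact y.2
        rw [LinearMap.mem_ker, Module.Basis.coord_apply] at this
        rw [this]
      · have := hpos12 k hk y hy
        rw [Module.Basis.coord_apply] at this
        exact le_of_lt this
    · intro k hk
      have hkeq : k = k₁ := by
        by_contra hcon
        exact hk (Finset.mem_erase.mpr ⟨fun h => hcon (Subtype.ext h), k.2⟩)
      have hyk : y.1 ∈ LinearMap.ker (b.coord k₁) := by rw [← hHker]; exact y.2
      rw [LinearMap.mem_ker, Module.Basis.coord_apply] at hyk
      rw [hkeq, hyk]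


end AC
end
end
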